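/- arXiv:1808.10621 — 8 statements merged into one kernel-verified Lean document; each statement's English description precedes it below -/
import Mathlib

section
/- Let Ω be a bounded, open, connected subset of ℝ^d and let ν : ℝ^d → ℝ^d be a map such that for every x in the frontier ∂Ω one has ν(x) ≠ 0 and ⟨x − p, ν(x)⟩ ≥ 0 for every p ∈ Ω. Then Ω is convex. -/
open scoped RealInnerProductSpace

set_option maxHeartbeats 1000000 in
/-- If a bounded, open, connected set `Ω ⊆ ℝ^d` admits a map `ν` which is nonzero on the
frontier `∂Ω` and satisfies `⟪x - p, ν x⟫ ≥ 0` for all `x ∈ ∂Ω` and `p ∈ Ω`,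
then `Ω` is convex. -/
theorem frontier_inner_nonneg_convex
    (d : ℕ) (Ω : Set (EuclideanSpace ℝ (Fin d)))
    (hopen : IsOpen Ω) (hbd : Bornology.IsBounded Ω) (hconn : IsConnected Ω)
    (ν : EuclideanSpace ℝ (Fin d) → EuclideanSpace ℝ (Fin d))
    (hν : ∀ x ∈ frontier Ω, ν x ≠ 0)
    (h : ∀ x ∈ frontier Ω, ∀ p ∈ Ω, 0 ≤ ⟪x - p, ν x⟫) :
    Convex ℝ Ω := by
  intro p hp q hq a b ha hb hab
  by_contra hz
  set f : ℝ → EuclideanSpace ℝ (Fin d) := fun s => p + s • (q - p) with hf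
  have hfc : Continuous f := by fun_prop
  have hfb : f b = a • p + b • q := by
    have : a = 1 - b := by linarith
    simp only [hf, this]
    module
  set S : Set ℝ := {s | s ∈ Set.Icc (0:ℝ) 1 ∧ f s ∉ Ω} with hS
  have hSne : S.Nonempty := ⟨b, ⟨hb, by linarith⟩, by rwa [hfb]⟩
  have hSclosed : IsClosed S := by
    have : S = Set.Icc (0:ℝ) 1 ∩ f ⁻¹' Ωᶜ := rfl
    rw [this]
    exact isClosed_Icc.inter (hopen.isClosed_compl.preimage hfc)
  have hSbdd : BddBelow S := ⟨0, fun s hs => hs.1.1⟩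
  set t₀ := sInf S with ht₀
  have ht₀S : t₀ ∈ S := hSclosed.csInf_mem hSne hSbdd
  obtain ⟨⟨ht₀0, ht₀1⟩, hft₀⟩ := ht₀S
  have hf0 : f 0 = p := by simp [hf]
  have ht₀pos : 0 < t₀ := by
    rcases lt_or_eq_of_le ht₀0 with h' | h'
    · exact h'
    · exact absurd (h' ▸ hf0 ▸ hp : f t₀ ∈ Ω) hft₀
  -- every s ∈ [0, t₀) maps into Ω
  have hmaps : Set.MapsTo f (Set.Ico 0 t₀) Ω := by
    intro s hs
    by_contra hsΩ
    exact absurd (csInf_le hSbdd ⟨⟨hs.1, le_trans hs.2.le ht₀1⟩, hsΩ⟩) (not_le.mpr hs.2)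
  set x := f t₀ with hx
  have hxcl : x ∈ closure Ω := by
    have h1 : t₀ ∈ closure (Set.Ico 0 t₀) := by
      rw [closure_Ico (ne_of_lt ht₀pos)]
      exact ⟨ht₀0, le_rfl⟩
    have := (hfc.continuousWithinAt (s := Set.Ico 0 t₀) (x := t₀)).mem_closure_image h1
    exact closure_mono (Set.image_subset_iff.mpr hmaps) this
  have hxfr : x ∈ frontier Ω := by
    rw [hopen.frontier_eq]
    exact ⟨hxcl, hft₀⟩
  have ht₀lt1 : t₀ < 1 := by
    rcases lt_or_eq_of_le ht₀1 with h' | h'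
    · exact h'
    · exfalso
      have hq1 : f 1 = q := by simp only [hf]; module
      exact hft₀ (by rw [hx, h', hq1]; exact hq)
  set w := ν x with hw
  have hxp : x - p = t₀ • (q - p) := by simp [hx, hf]
  have hxq : x - q = (t₀ - 1) • (q - p) := by simp [hx, hf]; module
  have h1 : 0 ≤ t₀ * ⟪q - p, w⟫ := by
    have := h x hxfr p hp
    rwa [hxp, real_inner_smul_left] at this
  have h2 : 0 ≤ (t₀ - 1) * ⟪q - p, w⟫ := by
    have := h x hxfr q hq
    rwa [hxq, real_inner_smul_left] at this
  have hip : ⟪q - p, w⟫ = 0 := by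
    have ha' : 0 ≤ ⟪q - p, w⟫ := nonneg_of_mul_nonneg_right h1 ht₀pos
    nlinarith
  have hxpw : ⟪x - p, w⟫ = 0 := by
    rw [hxp, real_inner_smul_left, hip, mul_zero]
  -- perturb p in direction w
  obtain ⟨ε, hε, hball⟩ := Metric.isOpen_iff.mp hopen p hp
  have hwne : w ≠ 0 := hν x hxfr
  have hwnorm : 0 < ‖w‖ := norm_pos_iff.mpr hwne
  set c := ε / (2 * ‖w‖) with hc
  have hcpos : 0 < c := div_pos hε (by positivity)
  set p' := p + c • w with hp'
  have hp'Ω : p' ∈ Ω := by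
    apply hball
    simp only [Metric.mem_ball, hp', dist_eq_norm]
    have : p + c • w - p = c • w := by abel
    rw [this, norm_smul, Real.norm_eq_abs, abs_of_pos hcpos, hc]
    rw [div_mul_eq_mul_div, mul_comm]
    rw [div_lt_iff₀ (by positivity)]
    nlinarith
  have := h x hxfr p' hp'Ω
  have hxp' : x - p' = (x - p) - c • w := by simp [hp']; abel
  rw [hxp', inner_sub_left, hxpw, real_inner_smul_left, real_inner_self_eq_norm_sq] at this
  nlinarith [mul_pos hcpos (pow_pos hwnorm 2)]
end

section
/- Let r > 0, p ∈ ℝ², and let T be the inversion in the sphere of radius r centered at p, T x = (r²/|x − p|²)(x − p) + p for x ≠ p. Then for every Borel set s ⊆ ℝ² \ {p}, the 1-dimensional Hausdorff measure satisfies H¹(T(s)) = ∫_s (r²/|x − p|²) dH¹(x). (This is the change of variables formula ds(x*) = (r²/|x|²) ds(x) for arc length under inversion.) -/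
open MeasureTheory
open scoped ENNReal

local notation "E" => EuclideanSpace ℝ (Fin 2)

open Classical in
noncomputable def sphInv (r : ℝ) (p : E) (x : E) : E :=
  if x = p then p else (r ^ 2 / ‖x - p‖ ^ 2) • (x - p) + p

lemma sphInv_norm_smul (r : ℝ) (u v : E) (hu : u ≠ 0) (hv : v ≠ 0) :
    ‖(r ^ 2 / ‖u‖ ^ 2) • u - (r ^ 2 / ‖v‖ ^ 2) • v‖ = r ^ 2 * ‖u - v‖ / (‖u‖ * ‖v‖) := by
  have hnu : ‖u‖ ≠ 0 := norm_ne_zero_iff.2 hu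
  have hnv : ‖v‖ ≠ 0 := norm_ne_zero_iff.2 hv
  have h2 : (0:ℝ) ≤ r ^ 2 * ‖u - v‖ / (‖u‖ * ‖v‖) := by positivity
  have h1 : ‖(r ^ 2 / ‖u‖ ^ 2) • u - (r ^ 2 / ‖v‖ ^ 2) • v‖ ^ 2
      = (r ^ 2 * ‖u - v‖ / (‖u‖ * ‖v‖)) ^ 2 := by
    rw [@norm_sub_sq_real, div_pow, mul_pow, mul_pow, @norm_sub_sq_real,
      norm_smul, norm_smul, real_inner_smul_left, real_inner_smul_right,
      mul_pow, mul_pow, Real.norm_eq_abs, Real.norm_eq_abs, sq_abs, sq_abs]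
    field_simp
    ring
  have := congrArg Real.sqrt h1
  rwa [Real.sqrt_sq (norm_nonneg _), Real.sqrt_sq h2] at this

lemma sphInv_apply (r : ℝ) (p x : E) (hx : x ≠ p) :
    sphInv r p x = (r ^ 2 / ‖x - p‖ ^ 2) • (x - p) + p := by
  simp [sphInv, hx]

lemma sphInv_dist (r : ℝ) (p : E) (x y : E) (hx : x ≠ p) (hy : y ≠ p) :
    ‖sphInv r p x - sphInv r p y‖ = r ^ 2 * ‖x - y‖ / (‖x - p‖ * ‖y - p‖) := by
  have hu : x - p ≠ 0 := sub_ne_zero.2 hx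
  have hv : y - p ≠ 0 := sub_ne_zero.2 hy
  have h := sphInv_norm_smul r (x - p) (y - p) hu hv
  rw [sphInv_apply r p x hx, sphInv_apply r p y hy]
  have hxy : (x - p) - (y - p) = x - y := by abel
  rw [add_sub_add_right_eq_sub, h, hxy]

lemma sphInv_norm_sub (r : ℝ) (p : E) (x : E) (hx : x ≠ p) :
    ‖sphInv r p x - p‖ = r ^ 2 / ‖x - p‖ := by
  have hu : x - p ≠ 0 := sub_ne_zero.2 hx
  have hnu : ‖x - p‖ ≠ 0 := norm_ne_zero_iff.2 hu
  rw [sphInv_apply r p x hx, add_sub_cancel_right, norm_smul, Real.norm_eq_abs,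
    abs_div, abs_of_nonneg (by positivity : (0:ℝ) ≤ r ^ 2), abs_of_nonneg (by positivity)]
  field_simp

lemma sphInv_ne (r : ℝ) (hr : 0 < r) (p : E) (x : E) (hx : x ≠ p) : sphInv r p x ≠ p := by
  intro h
  have := sphInv_norm_sub r p x hx
  rw [h, sub_self, norm_zero] at this
  have hnu : (0:ℝ) < ‖x - p‖ := norm_pos_iff.2 (sub_ne_zero.2 hx)
  have : r ^ 2 / ‖x - p‖ > 0 := by positivity
  linarith

lemma sphInv_invol (r : ℝ) (hr : 0 < r) (p : E) (x : E) (hx : x ≠ p) :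
    sphInv r p (sphInv r p x) = x := by
  have hnu : (0:ℝ) < ‖x - p‖ := norm_pos_iff.2 (sub_ne_zero.2 hx)
  have h1 := sphInv_ne r hr p x hx
  rw [sphInv_apply r p _ h1, sphInv_norm_sub r p x hx, sphInv_apply r p x hx,
    add_sub_cancel_right, smul_smul]
  have : r ^ 2 / (r ^ 2 / ‖x - p‖) ^ 2 * (r ^ 2 / ‖x - p‖ ^ 2) = 1 := by
    field_simp
  rw [this, one_smul, sub_add_cancel]

lemma sphInv_p (r : ℝ) (p : E) : sphInv r p p = p := by simp [sphInv]

lemma sphInv_inj (r : ℝ) (hr : 0 < r) (p : E) : Function.Injective (sphInv r p) := by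
  intro x y h
  by_cases hx : x = p <;> by_cases hy : y = p
  · rw [hx, hy]
  · exact absurd (by rw [hx, sphInv_p] at h; exact h.symm) (sphInv_ne r hr p y hy)
  · exact absurd (by rw [hy, sphInv_p] at h; exact h) (sphInv_ne r hr p x hx)
  · rw [← sphInv_invol r hr p x hx, ← sphInv_invol r hr p y hy, h]

lemma sphInv_meas (r : ℝ) (p : E) : Measurable (sphInv r p) := by
  have hn : Measurable fun x : E => ‖x - p‖ := (continuous_id.sub continuous_const).norm.measurable
  have hF : Measurable fun x : E => (r ^ 2 / ‖x - p‖ ^ 2) • (x - p) + p :=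
    ((measurable_const.div (hn.pow_const 2)).smul
      (measurable_id.sub measurable_const)).add_const p
  exact Measurable.ite (measurableSet_eq) measurable_const hF

lemma sphInv_lipschitz (r : ℝ) (hr : 0 < r) (p : E) (a : ℝ) (ha : 0 < a) :
    LipschitzOnWith (r ^ 2 / a ^ 2).toNNReal (sphInv r p) {x : E | a ≤ ‖x - p‖} := by
  apply LipschitzOnWith.of_dist_le_mul
  intro x hx y hy
  simp only [Set.mem_setOf_eq] at hx hy
  have hxp : x ≠ p := by
    intro h; rw [h, sub_self, norm_zero] at hx; exact absurd hx (not_le.2 ha)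
  have hyp : y ≠ p := by
    intro h; rw [h, sub_self, norm_zero] at hy; exact absurd hy (not_le.2 ha)
  rw [dist_eq_norm, dist_eq_norm, sphInv_dist r p x y hxp hyp,
    Real.coe_toNNReal _ (by positivity)]
  have hx0 : (0:ℝ) < ‖x - p‖ := lt_of_lt_of_le ha hx
  have hy0 : (0:ℝ) < ‖y - p‖ := lt_of_lt_of_le ha hy
  rw [div_le_iff₀ (by positivity)]
  have haa : a * a ≤ ‖x - p‖ * ‖y - p‖ := mul_le_mul hx hy ha.le (norm_nonneg _)
  have hr2 : (0:ℝ) < r ^ 2 := by positivity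
  rw [div_mul_eq_mul_div, div_mul_eq_mul_div, le_div_iff₀ (by positivity)]
  have h0 : (0:ℝ) ≤ r ^ 2 * ‖x - y‖ := by positivity
  have : a ^ 2 ≤ ‖x - p‖ * ‖y - p‖ := by nlinarith
  exact mul_le_mul_of_nonneg_left this h0

lemma sphInv_image_le (r : ℝ) (hr : 0 < r) (p : E) (a : ℝ) (ha : 0 < a)
    (u : Set E) (hu : u ⊆ {x : E | a ≤ ‖x - p‖}) :
    μH[1] (sphInv r p '' u) ≤ ENNReal.ofReal (r ^ 2 / a ^ 2) * μH[1] u := by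
  have h := ((sphInv_lipschitz r hr p a ha).mono hu).hausdorffMeasure_image_le
    (by norm_num : (0:ℝ) ≤ 1)
  simpa [ENNReal.ofReal, ENNReal.rpow_one] using h

lemma ennreal_squeeze (a b : ℝ≥0∞) (h : ∀ t : ℝ, 1 < t → a ≤ ENNReal.ofReal (t ^ 2) * b) :
    a ≤ b := by
  have hseq : ∀ k : ℕ, a ≤ ENNReal.ofReal ((1 + 1 / (k + 1 : ℝ)) ^ 2) * b := by
    intro k
    refine h _ ?_
    have : (0:ℝ) < 1 / (k + 1 : ℝ) := by positivity
    linarith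
  have h1 : Filter.Tendsto (fun k : ℕ => (1 + 1 / (k + 1 : ℝ)) ^ 2) Filter.atTop (nhds 1) := by
    have := (Filter.Tendsto.const_add (1:ℝ) tendsto_one_div_add_atTop_nhds_zero_nat).pow 2
    simpa using this
  have h2 : Filter.Tendsto (fun k : ℕ => ENNReal.ofReal ((1 + 1 / (k + 1 : ℝ)) ^ 2))
      Filter.atTop (nhds 1) := by
    simpa using ENNReal.tendsto_ofReal h1
  have h3 := ENNReal.Tendsto.mul_const h2 (Or.inl one_ne_zero) (b := b)
  rw [one_mul] at h3
  exact ge_of_tendsto' h3 hseq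

lemma sphInv_f_meas (r : ℝ) (p : E) :
    Measurable fun x : E => ENNReal.ofReal (r ^ 2 / ‖x - p‖ ^ 2) :=
  (measurable_const.div
    (((continuous_id.sub continuous_const).norm.measurable).pow_const 2)).ennreal_ofReal

lemma annulus_bounds (r : ℝ) (hr : 0 < r) (p : E) (t : ℝ) (ht : 1 < t) (n : ℤ) (u : Set E)
    (hu1 : ∀ x ∈ u, t ^ n ≤ ‖x - p‖) (hu2 : ∀ x ∈ u, ‖x - p‖ < t ^ (n + 1)) :
    μH[1] (sphInv r p '' u)
        ≤ ENNReal.ofReal (t ^ 2) * ∫⁻ x in u, ENNReal.ofReal (r ^ 2 / ‖x - p‖ ^ 2) ∂μH[1]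
      ∧ (∫⁻ x in u, ENNReal.ofReal (r ^ 2 / ‖x - p‖ ^ 2) ∂μH[1])
        ≤ ENNReal.ofReal (t ^ 2) * μH[1] (sphInv r p '' u) := by
  have ht0 : (0:ℝ) < t := lt_trans one_pos ht
  have han : (0:ℝ) < t ^ n := zpow_pos ht0 n
  have hbn : (0:ℝ) < t ^ (n + 1) := zpow_pos ht0 (n + 1)
  have hbe : t ^ (n + 1) = t ^ n * t := zpow_add_one₀ ht0.ne' n
  have hxpos : ∀ x ∈ u, (0:ℝ) < ‖x - p‖ := fun x hx => lt_of_lt_of_le han (hu1 x hx)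
  have hne : ∀ x ∈ u, x ≠ p := by
    intro x hx h
    have := hxpos x hx
    rw [h, sub_self, norm_zero] at this
    exact lt_irrefl _ this
  constructor
  · have e1 : μH[1] (sphInv r p '' u) ≤ ENNReal.ofReal (r ^ 2 / (t ^ n) ^ 2) * μH[1] u :=
      sphInv_image_le r hr p _ han u (fun x hx => hu1 x hx)
    have e2 : ENNReal.ofReal (r ^ 2 / (t ^ n) ^ 2)
        = ENNReal.ofReal (t ^ 2) * ENNReal.ofReal (r ^ 2 / (t ^ (n + 1)) ^ 2) := by
      rw [← ENNReal.ofReal_mul (by positivity)]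
      congr 1
      rw [hbe]
      field_simp
    have e3 : ENNReal.ofReal (r ^ 2 / (t ^ (n + 1)) ^ 2) * μH[1] u
        ≤ ∫⁻ x in u, ENNReal.ofReal (r ^ 2 / ‖x - p‖ ^ 2) ∂μH[1] := by
      rw [← setLIntegral_const]
      refine setLIntegral_mono (sphInv_f_meas r p) (fun x hx => ?_)
      refine ENNReal.ofReal_le_ofReal ?_
      have h1 := hxpos x hx
      have h2 := hu2 x hx
      gcongr
    calc μH[1] (sphInv r p '' u) ≤ ENNReal.ofReal (r ^ 2 / (t ^ n) ^ 2) * μH[1] u := e1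
      _ = ENNReal.ofReal (t ^ 2) * (ENNReal.ofReal (r ^ 2 / (t ^ (n + 1)) ^ 2) * μH[1] u) := by
          rw [e2, mul_assoc]
      _ ≤ _ := by exact mul_le_mul_right e3 _
  · have e4 : (∫⁻ x in u, ENNReal.ofReal (r ^ 2 / ‖x - p‖ ^ 2) ∂μH[1])
        ≤ ENNReal.ofReal (r ^ 2 / (t ^ n) ^ 2) * μH[1] u := by
      rw [← setLIntegral_const]
      refine setLIntegral_mono measurable_const (fun x hx => ?_)
      refine ENNReal.ofReal_le_ofReal ?_
      have h1 := hu1 x hx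
      gcongr
    have hgg : sphInv r p '' (sphInv r p '' u) = u := by
      rw [Set.image_image]
      calc (fun x => sphInv r p (sphInv r p x)) '' u
          = id '' u := Set.image_congr (fun x hx => sphInv_invol r hr p x (hne x hx))
        _ = u := Set.image_id u
    have hsub2 : sphInv r p '' u ⊆ {y : E | r ^ 2 / t ^ (n + 1) ≤ ‖y - p‖} := by
      rintro y ⟨x, hx, rfl⟩
      simp only [Set.mem_setOf_eq]
      rw [sphInv_norm_sub r p x (hne x hx)]
      have h1 := hxpos x hx
      have h2 := hu2 x hx
      gcongr
    have e5 : μH[1] u ≤ ENNReal.ofReal (r ^ 2 / (r ^ 2 / t ^ (n + 1)) ^ 2)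
        * μH[1] (sphInv r p '' u) := by
      conv_lhs => rw [← hgg]
      exact sphInv_image_le r hr p _ (by positivity) _ hsub2
    have e6 : ENNReal.ofReal (r ^ 2 / (t ^ n) ^ 2)
          * ENNReal.ofReal (r ^ 2 / (r ^ 2 / t ^ (n + 1)) ^ 2) = ENNReal.ofReal (t ^ 2) := by
      rw [← ENNReal.ofReal_mul (by positivity)]
      congr 1
      rw [hbe]
      field_simp
    calc (∫⁻ x in u, ENNReal.ofReal (r ^ 2 / ‖x - p‖ ^ 2) ∂μH[1])
        ≤ ENNReal.ofReal (r ^ 2 / (t ^ n) ^ 2) * μH[1] u := e4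
      _ ≤ ENNReal.ofReal (r ^ 2 / (t ^ n) ^ 2)
          * (ENNReal.ofReal (r ^ 2 / (r ^ 2 / t ^ (n + 1)) ^ 2) * μH[1] (sphInv r p '' u)) :=
          mul_le_mul_right e5 _
      _ = ENNReal.ofReal (t ^ 2) * μH[1] (sphInv r p '' u) := by rw [← mul_assoc, e6]

/-- Change of variables for arc length (1-dimensional Hausdorff measure) in `ℝ²` under
inversion in the sphere of radius `r` centered at `p`:
`H¹(T(s)) = ∫_s (r²/|x − p|²) dH¹(x)` for Borel sets `s ⊆ ℝ² \ {p}`. -/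
theorem hausdorff_one_inversion_dim2
    (r : ℝ) (hr : 0 < r) (p : EuclideanSpace ℝ (Fin 2))
    (T : EuclideanSpace ℝ (Fin 2) → EuclideanSpace ℝ (Fin 2))
    (hT : ∀ x : EuclideanSpace ℝ (Fin 2), x ≠ p →
      T x = (r ^ 2 / ‖x - p‖ ^ 2) • (x - p) + p)
    (s : Set (EuclideanSpace ℝ (Fin 2))) (hs : MeasurableSet s) (hps : p ∉ s) :
    μH[1] (T '' s) = ∫⁻ x in s, ENNReal.ofReal (r ^ 2 / ‖x - p‖ ^ 2) ∂μH[1] := by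
  have hsp : ∀ x ∈ s, x ≠ p := fun x hx h => hps (h ▸ hx)
  have himg : T '' s = sphInv r p '' s := Set.image_congr fun x hx => by
    rw [hT x (hsp x hx), sphInv_apply r p x (hsp x hx)]
  rw [himg]
  have hemb : MeasurableEmbedding (sphInv r p) :=
    (sphInv_meas r p).measurableEmbedding (sphInv_inj r hr p)
  -- the key two-sided bound for every ratio `t > 1`
  have key : ∀ t : ℝ, 1 < t →
      μH[1] (sphInv r p '' s)
          ≤ ENNReal.ofReal (t ^ 2) * ∫⁻ x in s, ENNReal.ofReal (r ^ 2 / ‖x - p‖ ^ 2) ∂μH[1]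
        ∧ (∫⁻ x in s, ENNReal.ofReal (r ^ 2 / ‖x - p‖ ^ 2) ∂μH[1])
          ≤ ENNReal.ofReal (t ^ 2) * μH[1] (sphInv r p '' s) := by
    intro t ht
    have ht0 : (0:ℝ) < t := lt_trans one_pos ht
    set u : ℤ → Set (EuclideanSpace ℝ (Fin 2)) :=
      fun n => s ∩ {x | t ^ n ≤ ‖x - p‖ ∧ ‖x - p‖ < t ^ (n + 1)} with hu
    have hu_meas : ∀ n, MeasurableSet (u n) := by
      intro n
      refine hs.inter ?_
      have : {x : EuclideanSpace ℝ (Fin 2) | t ^ n ≤ ‖x - p‖ ∧ ‖x - p‖ < t ^ (n + 1)}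
          = (fun x : EuclideanSpace ℝ (Fin 2) => ‖x - p‖) ⁻¹' Set.Ico (t ^ n) (t ^ (n + 1)) := rfl
      rw [this]
      exact (continuous_id.sub continuous_const).norm.measurable measurableSet_Ico
    have hdisj : Pairwise (Function.onFun Disjoint u) := by
      intro m n hmn
      refine Set.disjoint_left.2 fun x hxm hxn => ?_
      rcases lt_or_gt_of_ne hmn with h | h
      · have h1 : t ^ (m + 1) ≤ t ^ n := zpow_le_zpow_right₀ ht.le (by omega)
        have := hxm.2.2.trans_le (h1.trans hxn.2.1)
        exact lt_irrefl _ this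
      · have h1 : t ^ (n + 1) ≤ t ^ m := zpow_le_zpow_right₀ ht.le (by omega)
        have := hxn.2.2.trans_le (h1.trans hxm.2.1)
        exact lt_irrefl _ this
    have hcover : s = ⋃ n, u n := by
      ext x
      constructor
      · intro hx
        have hx0 : (0:ℝ) < ‖x - p‖ := norm_pos_iff.2 (sub_ne_zero.2 (hsp x hx))
        obtain ⟨n, h1, h2⟩ := exists_mem_Ico_zpow hx0 ht
        exact Set.mem_iUnion.2 ⟨n, hx, h1, h2⟩
      · intro hx
        obtain ⟨n, hn⟩ := Set.mem_iUnion.1 hx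
        exact hn.1
    have hb := fun n => annulus_bounds r hr p t ht n (u n)
      (fun x hx => hx.2.1) (fun x hx => hx.2.2)
    have hint : (∫⁻ x in s, ENNReal.ofReal (r ^ 2 / ‖x - p‖ ^ 2) ∂μH[1])
        = ∑' n : ℤ, ∫⁻ x in u n, ENNReal.ofReal (r ^ 2 / ‖x - p‖ ^ 2) ∂μH[1] := by
      conv_lhs => rw [hcover]
      exact lintegral_iUnion hu_meas hdisj _
    have himgU : sphInv r p '' s = ⋃ n, sphInv r p '' u n := by
      conv_lhs => rw [hcover]
      exact Set.image_iUnion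
    have hmeasU : μH[1] (sphInv r p '' s) = ∑' n : ℤ, μH[1] (sphInv r p '' u n) := by
      rw [himgU]
      refine measure_iUnion ?_ (fun n => hemb.measurableSet_image' (hu_meas n))
      intro m n hmn
      exact Set.disjoint_image_of_injective (sphInv_inj r hr p) (hdisj hmn)
    constructor
    · calc μH[1] (sphInv r p '' s) ≤ ∑' n : ℤ, μH[1] (sphInv r p '' u n) := by
            rw [himgU]; exact measure_iUnion_le _
        _ ≤ ∑' n : ℤ, ENNReal.ofReal (t ^ 2)
              * ∫⁻ x in u n, ENNReal.ofReal (r ^ 2 / ‖x - p‖ ^ 2) ∂μH[1] :=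
            ENNReal.tsum_le_tsum fun n => (hb n).1
        _ = ENNReal.ofReal (t ^ 2)
              * ∫⁻ x in s, ENNReal.ofReal (r ^ 2 / ‖x - p‖ ^ 2) ∂μH[1] := by
            rw [ENNReal.tsum_mul_left, hint]
    · calc (∫⁻ x in s, ENNReal.ofReal (r ^ 2 / ‖x - p‖ ^ 2) ∂μH[1])
          = ∑' n : ℤ, ∫⁻ x in u n, ENNReal.ofReal (r ^ 2 / ‖x - p‖ ^ 2) ∂μH[1] := hint
        _ ≤ ∑' n : ℤ, ENNReal.ofReal (t ^ 2) * μH[1] (sphInv r p '' u n) :=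
            ENNReal.tsum_le_tsum fun n => (hb n).2
        _ = ENNReal.ofReal (t ^ 2) * μH[1] (sphInv r p '' s) := by
            rw [ENNReal.tsum_mul_left, hmeasU]
  exact le_antisymm (ennreal_squeeze _ _ fun t ht => (key t ht).1)
    (ennreal_squeeze _ _ fun t ht => (key t ht).2)
end

section
/- Let r > 0, p ∈ ℝ³, and let T be the inversion in the sphere of radius r centered at p, T x = (r²/|x − p|²)(x − p) + p for x ≠ p. Then for every Borel set s ⊆ ℝ³ \ {p}, the 2-dimensional Hausdorff measure satisfies H²(T(s)) = ∫_s (r²/|x − p|²)² dH²(x). (This is the change of variables formula dS(x*) = (r⁴/|x|⁴) dS(x) for surface measure under inversion.) -/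
open MeasureTheory Set
open scoped ENNReal RealInnerProductSpace

lemma inv_dist_aux {E : Type*} [NormedAddCommGroup E] [InnerProductSpace ℝ E]
    (r : ℝ) (a b : E) (ha : a ≠ 0) (hb : b ≠ 0) :
    ‖(r ^ 2 / ‖a‖ ^ 2) • a - (r ^ 2 / ‖b‖ ^ 2) • b‖ = r ^ 2 * ‖a - b‖ / (‖a‖ * ‖b‖) := by
  have ha' : (0:ℝ) < ‖a‖ := norm_pos_iff.2 ha
  have hb' : (0:ℝ) < ‖b‖ := norm_pos_iff.2 hb
  have hsq : ‖(r ^ 2 / ‖a‖ ^ 2) • a - (r ^ 2 / ‖b‖ ^ 2) • b‖ ^ 2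
      = (r ^ 2 * ‖a - b‖ / (‖a‖ * ‖b‖)) ^ 2 := by
    rw [norm_sub_sq_real, norm_smul, norm_smul, real_inner_smul_left, real_inner_smul_right]
    rw [div_pow, mul_pow (r ^ 2) ‖a - b‖, norm_sub_sq_real a b]
    have hra : |r ^ 2 / ‖a‖ ^ 2| = r ^ 2 / ‖a‖ ^ 2 := abs_of_nonneg (by positivity)
    have hrb : |r ^ 2 / ‖b‖ ^ 2| = r ^ 2 / ‖b‖ ^ 2 := abs_of_nonneg (by positivity)
    rw [Real.norm_eq_abs, Real.norm_eq_abs, hra, hrb]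
    field_simp
    ring
  have h1 : (0:ℝ) ≤ ‖(r ^ 2 / ‖a‖ ^ 2) • a - (r ^ 2 / ‖b‖ ^ 2) • b‖ := norm_nonneg _
  have h2 : (0:ℝ) ≤ r ^ 2 * ‖a - b‖ / (‖a‖ * ‖b‖) := by positivity
  nlinarith [hsq, h1, h2]

lemma ennreal_le_of_forall_q {x y : ℝ≥0∞}
    (h : ∀ q : ℝ, 1 < q → x ≤ ENNReal.ofReal (q ^ 4) * y) : x ≤ y := by
  refine ENNReal.le_of_forall_lt_one_mul_le fun a ha => ?_
  rcases eq_or_ne a 0 with rfl | ha0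
  · simp
  have hat : a = ENNReal.ofReal a.toReal := by
    rw [ENNReal.ofReal_toReal ha.ne_top]
  have ht0 : 0 < a.toReal := ENNReal.toReal_pos ha0 ha.ne_top
  have ht1 : a.toReal < 1 := by
    rw [← ENNReal.ofReal_one] at ha
    calc a.toReal < (ENNReal.ofReal 1).toReal := by
          exact ENNReal.toReal_strict_mono (by simp) ha
      _ = 1 := by simp
  set t := a.toReal
  set q : ℝ := t⁻¹ ^ ((4:ℝ)⁻¹)
  have hq1 : 1 < q := by
    apply Real.one_lt_rpow_iff_of_pos (by positivity) |>.2
    exact Or.inl ⟨(one_lt_inv₀ ht0).2 ht1, by norm_num⟩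
  have hq4 : q ^ 4 = t⁻¹ := by
    rw [← Real.rpow_natCast q 4, ← Real.rpow_mul (by positivity)]
    norm_num
  calc a * x ≤ a * (ENNReal.ofReal (q ^ 4) * y) := by
        exact mul_le_mul_right (h q hq1) a
    _ = (ENNReal.ofReal t * ENNReal.ofReal t⁻¹) * y := by
        rw [hat, hq4]; ring
    _ = y := by
        rw [← ENNReal.ofReal_mul ht0.le, mul_inv_cancel₀ ht0.ne', ENNReal.ofReal_one, one_mul]

/-- Change of variables for surface measure (2-dimensional Hausdorff measure) in `ℝ³` under
inversion in the sphere of radius `r` centered at `p`: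
`H²(T(s)) = ∫_s (r²/|x − p|²)² dH²(x)` for Borel sets `s ⊆ ℝ³ \ {p}`. -/
theorem hausdorff_two_inversion_dim3
    (r : ℝ) (hr : 0 < r) (p : EuclideanSpace ℝ (Fin 3))
    (T : EuclideanSpace ℝ (Fin 3) → EuclideanSpace ℝ (Fin 3))
    (hT : ∀ x : EuclideanSpace ℝ (Fin 3), x ≠ p →
      T x = (r ^ 2 / ‖x - p‖ ^ 2) • (x - p) + p)
    (s : Set (EuclideanSpace ℝ (Fin 3))) (hs : MeasurableSet s) (hps : p ∉ s) :
    μH[2] (T '' s) = ∫⁻ x in s, ENNReal.ofReal ((r ^ 2 / ‖x - p‖ ^ 2) ^ 2) ∂μH[2] := by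
  classical
  have hr2 : (0:ℝ) < r ^ 2 := by positivity
  have hxp : ∀ x : EuclideanSpace ℝ (Fin 3), x ≠ p → (0:ℝ) < ‖x - p‖ := by
    intro x hx
    rw [norm_pos_iff, sub_ne_zero]
    exact hx
  have hTsub : ∀ x : EuclideanSpace ℝ (Fin 3), x ≠ p → T x - p = (r ^ 2 / ‖x - p‖ ^ 2) • (x - p) := by
    intro x hx; rw [hT x hx]; abel
  have hTnorm : ∀ x : EuclideanSpace ℝ (Fin 3), x ≠ p → ‖T x - p‖ = r ^ 2 / ‖x - p‖ := by
    intro x hx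
    have h := hxp x hx
    rw [hTsub x hx, norm_smul, Real.norm_eq_abs, abs_of_nonneg (by positivity)]
    field_simp
  have hTne : ∀ x : EuclideanSpace ℝ (Fin 3), x ≠ p → T x ≠ p := by
    intro x hx
    have h1 := hTnorm x hx
    have h2 := hxp x hx
    intro h
    rw [h, sub_self, norm_zero] at h1
    have : 0 < r ^ 2 / ‖x - p‖ := by positivity
    linarith [h1 ▸ this]
  have hTdist : ∀ x y : EuclideanSpace ℝ (Fin 3), x ≠ p → y ≠ p →
      dist (T x) (T y) = r ^ 2 * dist x y / (‖x - p‖ * ‖y - p‖) := by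
    intro x y hx hy
    have h : T x - T y = (r ^ 2 / ‖x - p‖ ^ 2) • (x - p) - (r ^ 2 / ‖y - p‖ ^ 2) • (y - p) := by
      rw [hT x hx, hT y hy]; abel
    rw [dist_eq_norm, h,
      inv_dist_aux r (x - p) (y - p) (sub_ne_zero.2 hx) (sub_ne_zero.2 hy), dist_eq_norm]
    congr 2
    abel
  have hTT : ∀ x : EuclideanSpace ℝ (Fin 3), x ≠ p → T (T x) = x := by
    intro x hx
    have h := hxp x hx
    rw [hT _ (hTne x hx), hTnorm x hx, hTsub x hx, smul_smul]
    have h1 : r ^ 2 / (r ^ 2 / ‖x - p‖) ^ 2 * (r ^ 2 / ‖x - p‖ ^ 2) = 1 := by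
      field_simp
    rw [h1, one_smul, sub_add_cancel]
  -- Lipschitz on sets bounded away from p
  have hlip : ∀ (a : ℝ), 0 < a → ∀ A : Set (EuclideanSpace ℝ (Fin 3)), (∀ x ∈ A, a ≤ ‖x - p‖) →
      LipschitzOnWith (r ^ 2 / a ^ 2).toNNReal T A := by
    intro a ha A hA
    rw [lipschitzOnWith_iff_dist_le_mul]
    intro x hx y hy
    have hxa := hA x hx
    have hya := hA y hy
    have hx' : x ≠ p := by
      intro h; rw [h, sub_self, norm_zero] at hxa; linarith
    have hy' : y ≠ p := by
      intro h; rw [h, sub_self, norm_zero] at hya; linarith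
    rw [hTdist x y hx' hy']
    rw [Real.coe_toNNReal _ (by positivity)]
    have h1 : a * a ≤ ‖x - p‖ * ‖y - p‖ := mul_le_mul hxa hya ha.le (by positivity)
    calc r ^ 2 * dist x y / (‖x - p‖ * ‖y - p‖) ≤ r ^ 2 * dist x y / (a * a) := by
          apply div_le_div_of_nonneg_left (by positivity) (by positivity) h1
      _ = r ^ 2 / a ^ 2 * dist x y := by
          rw [pow_two]
          ring
  -- pow conversion helper
  have hpow : ∀ c : ℝ, 0 ≤ c → ((c.toNNReal : ℝ≥0∞)) ^ (2:ℝ) = ENNReal.ofReal (c ^ 2) := by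
    intro c hc
    have h2 : ((c.toNNReal : ℝ≥0∞)) ^ (2:ℝ) = ((c.toNNReal : ℝ≥0∞)) ^ (2:ℕ) := by
      rw [← ENNReal.rpow_natCast]; norm_num
    rw [h2, ENNReal.ofReal_pow hc]
    rfl
  -- measurable image description
  set F : EuclideanSpace ℝ (Fin 3) → EuclideanSpace ℝ (Fin 3) := fun x => (r ^ 2 / ‖x - p‖ ^ 2) • (x - p) + p with hF
  have hFmeas : Measurable F := by
    apply Measurable.add_const
    apply Measurable.fun_smul
    · exact (measurable_const.div (((continuous_id.sub continuous_const).norm.pow 2).measurable))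
    · exact measurable_id.sub_const p
  have himg : ∀ A : Set (EuclideanSpace ℝ (Fin 3)), (∀ x ∈ A, x ≠ p) → T '' A = F ⁻¹' A \ {p} := by
    intro A hA
    ext y
    constructor
    · rintro ⟨x, hxA, rfl⟩
      have hx : x ≠ p := hA x hxA
      refine ⟨?_, hTne x hx⟩
      show F (T x) ∈ A
      have h : F (T x) = T (T x) := (hT (T x) (hTne x hx)).symm
      rw [h, hTT x hx]
      exact hxA
    · rintro ⟨hy1, hy2⟩
      have hy2' : y ≠ p := hy2
      have h : F y = T y := (hT y hy2').symm
      have hTyA : T y ∈ A := by rw [← h]; exact hy1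
      exact ⟨T y, hTyA, hTT y hy2'⟩
  -- key annulus estimate
  have key : ∀ a b : ℝ, 0 < a → a ≤ b → ∀ A : Set (EuclideanSpace ℝ (Fin 3)),
      (∀ x ∈ A, a ≤ ‖x - p‖ ∧ ‖x - p‖ ≤ b) →
      ENNReal.ofReal ((r ^ 2 / b ^ 2) ^ 2) * μH[2] A ≤ μH[2] (T '' A) ∧
      μH[2] (T '' A) ≤ ENNReal.ofReal ((r ^ 2 / a ^ 2) ^ 2) * μH[2] A := by
    intro a b ha hab A hA
    have hb : (0:ℝ) < b := lt_of_lt_of_le ha hab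
    have hAp : ∀ x ∈ A, x ≠ p := by
      intro x hx h
      have := (hA x hx).1
      rw [h, sub_self, norm_zero] at this
      linarith
    constructor
    · -- lower bound via involution
      have hTTA : T '' (T '' A) = A := by
        rw [Set.image_image]
        calc (fun x => T (T x)) '' A = id '' A := by
              apply Set.image_congr
              intro x hx
              exact hTT x (hAp x hx)
          _ = A := Set.image_id A
      have hTA : ∀ y ∈ T '' A, r ^ 2 / b ≤ ‖y - p‖ := by
        rintro y ⟨x, hx, rfl⟩
        rw [hTnorm x (hAp x hx)]
        have := (hA x hx).2
        have h0 := hxp x (hAp x hx)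
        gcongr
      have hlb := (hlip (r ^ 2 / b) (by positivity) (T '' A) hTA).hausdorffMeasure_image_le
        (by norm_num : (0:ℝ) ≤ 2)
      rw [hTTA, hpow _ (by positivity)] at hlb
      have hb2 : r ^ 2 / (r ^ 2 / b) ^ 2 = b ^ 2 / r ^ 2 := by
        field_simp
      rw [hb2] at hlb
      calc ENNReal.ofReal ((r ^ 2 / b ^ 2) ^ 2) * μH[2] A
          ≤ ENNReal.ofReal ((r ^ 2 / b ^ 2) ^ 2) *
            (ENNReal.ofReal ((b ^ 2 / r ^ 2) ^ 2) * μH[2] (T '' A)) :=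
            mul_le_mul_right hlb _
        _ = (ENNReal.ofReal ((r ^ 2 / b ^ 2) ^ 2) * ENNReal.ofReal ((b ^ 2 / r ^ 2) ^ 2)) *
            μH[2] (T '' A) := by rw [mul_assoc]
        _ = μH[2] (T '' A) := by
            rw [← ENNReal.ofReal_mul (by positivity)]
            have h1 : (r ^ 2 / b ^ 2) ^ 2 * (b ^ 2 / r ^ 2) ^ 2 = 1 := by
              field_simp
            rw [h1, ENNReal.ofReal_one, one_mul]
    · have hub := (hlip a ha A (fun x hx => (hA x hx).1)).hausdorffMeasure_image_le
        (by norm_num : (0:ℝ) ≤ 2)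
      rwa [hpow _ (by positivity)] at hub
  suffices main : ∀ q : ℝ, 1 < q →
      μH[2] (T '' s) ≤ ENNReal.ofReal (q ^ 4) *
        ∫⁻ x in s, ENNReal.ofReal ((r ^ 2 / ‖x - p‖ ^ 2) ^ 2) ∂μH[2] ∧
      (∫⁻ x in s, ENNReal.ofReal ((r ^ 2 / ‖x - p‖ ^ 2) ^ 2) ∂μH[2]) ≤
        ENNReal.ofReal (q ^ 4) * μH[2] (T '' s) by
    exact le_antisymm (ennreal_le_of_forall_q fun q hq => (main q hq).1)
      (ennreal_le_of_forall_q fun q hq => (main q hq).2)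
  intro q hq
  have hq0 : (0:ℝ) < q := lt_trans one_pos hq
  set Ak : ℤ → Set (EuclideanSpace ℝ (Fin 3)) :=
    fun k => s ∩ {x | q ^ k ≤ ‖x - p‖ ∧ ‖x - p‖ < q ^ (k + 1)} with hAk
  have hsp : ∀ x ∈ s, x ≠ p := fun x hx h => hps (h ▸ hx)
  have hAkm : ∀ k, MeasurableSet (Ak k) := by
    intro k
    apply hs.inter
    have h : {x : EuclideanSpace ℝ (Fin 3) | q ^ k ≤ ‖x - p‖ ∧ ‖x - p‖ < q ^ (k + 1)}
        = (fun x : EuclideanSpace ℝ (Fin 3) => ‖x - p‖) ⁻¹' (Set.Ico (q ^ k) (q ^ (k + 1))) := rfl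
    rw [h]
    exact (continuous_id.sub continuous_const).norm.measurable measurableSet_Ico
  have hAkd : Pairwise (Function.onFun Disjoint Ak) := by
    have main2 : ∀ k l : ℤ, k < l → Disjoint (Ak k) (Ak l) := by
      intro k l hkl'
      rw [Set.disjoint_left]
      rintro x ⟨-, h1, h2⟩ ⟨-, h3, -⟩
      have h4 : q ^ (k + 1) ≤ q ^ l := zpow_le_zpow_right₀ hq.le (by omega)
      linarith
    intro k l hkl
    rcases lt_or_gt_of_ne hkl with h | h
    · exact main2 k l h
    · exact (main2 l k h).symm
  have hcover : s = ⋃ k, Ak k := by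
    ext x
    simp only [Set.mem_iUnion, hAk, Set.mem_inter_iff, Set.mem_setOf_eq]
    constructor
    · intro hx
      obtain ⟨k, hk⟩ := exists_mem_Ico_zpow (hxp x (hsp x hx)) hq
      exact ⟨k, hx, hk.1, hk.2⟩
    · rintro ⟨k, hk, -⟩; exact hk
  have hAksub : ∀ k, ∀ x ∈ Ak k, x ≠ p := fun k x hx => hsp x hx.1
  have hTmeas : ∀ k, MeasurableSet (T '' Ak k) := by
    intro k
    rw [himg (Ak k) (hAksub k)]
    exact (hFmeas (hAkm k)).diff (measurableSet_singleton p)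
  have hTdisj : Pairwise (Function.onFun Disjoint (fun k => T '' Ak k)) := by
    intro k l hkl
    have h := hAkd hkl
    have h2 : Disjoint (F ⁻¹' Ak k) (F ⁻¹' Ak l) := h.preimage F
    show Disjoint (T '' Ak k) (T '' Ak l)
    rw [himg (Ak k) (hAksub k), himg (Ak l) (hAksub l)]
    exact h2.mono Set.diff_subset Set.diff_subset
  have hsum1 : μH[2] (T '' s) = ∑' k, μH[2] (T '' Ak k) := by
    conv_lhs => rw [hcover]
    rw [Set.image_iUnion]
    exact measure_iUnion hTdisj hTmeas
  have hsum2 : (∫⁻ x in s, ENNReal.ofReal ((r ^ 2 / ‖x - p‖ ^ 2) ^ 2) ∂μH[2])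
      = ∑' k, ∫⁻ x in Ak k, ENNReal.ofReal ((r ^ 2 / ‖x - p‖ ^ 2) ^ 2) ∂μH[2] := by
    conv_lhs => rw [hcover]
    exact lintegral_iUnion hAkm hAkd _
  set c : ℤ → ℝ≥0∞ := fun k => ENNReal.ofReal ((r ^ 2 / (q ^ k) ^ 2) ^ 2) with hc
  have hqk : ∀ k : ℤ, (0:ℝ) < q ^ k := fun k => zpow_pos hq0 k
  have hmem : ∀ k, ∀ x ∈ Ak k, q ^ k ≤ ‖x - p‖ ∧ ‖x - p‖ ≤ q ^ (k + 1) :=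
    fun k x hx => ⟨hx.2.1, hx.2.2.le⟩
  have hkey := fun k : ℤ => key (q ^ k) (q ^ (k + 1)) (hqk k)
      (zpow_le_zpow_right₀ hq.le (by omega)) (Ak k) (hmem k)
  have hcq : ∀ k : ℤ, c k = ENNReal.ofReal (q ^ 4) * c (k + 1) := by
    intro k
    rw [hc, ← ENNReal.ofReal_mul (by positivity)]
    congr 1
    have h1 : q ^ (k + 1) = q ^ k * q := zpow_add_one₀ hq0.ne' k
    have h2 := hqk k
    rw [h1]
    field_simp
  have hint_ub : ∀ k, (∫⁻ x in Ak k, ENNReal.ofReal ((r ^ 2 / ‖x - p‖ ^ 2) ^ 2) ∂μH[2])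
      ≤ c k * μH[2] (Ak k) := by
    intro k
    rw [← setLIntegral_const (Ak k) (c k)]
    apply setLIntegral_mono' (hAkm k)
    intro x hx
    apply ENNReal.ofReal_le_ofReal
    have h1 := (hmem k x hx).1
    have h2 := hqk k
    gcongr
  have hint_lb : ∀ k, c (k + 1) * μH[2] (Ak k)
      ≤ ∫⁻ x in Ak k, ENNReal.ofReal ((r ^ 2 / ‖x - p‖ ^ 2) ^ 2) ∂μH[2] := by
    intro k
    rw [← setLIntegral_const (Ak k) (c (k + 1))]
    apply setLIntegral_mono' (hAkm k)
    intro x hx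
    apply ENNReal.ofReal_le_ofReal
    have h1 := (hmem k x hx).2
    have h0 : 0 < ‖x - p‖ := lt_of_lt_of_le (hqk k) (hmem k x hx).1
    gcongr
  constructor
  · rw [hsum1, hsum2]
    calc ∑' k, μH[2] (T '' Ak k) ≤ ∑' k, c k * μH[2] (Ak k) :=
          ENNReal.tsum_le_tsum fun k => (hkey k).2
      _ = ∑' k, ENNReal.ofReal (q ^ 4) * (c (k + 1) * μH[2] (Ak k)) :=
          tsum_congr fun k => by rw [hcq k, mul_assoc]
      _ = ENNReal.ofReal (q ^ 4) * ∑' k, c (k + 1) * μH[2] (Ak k) := ENNReal.tsum_mul_left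
      _ ≤ ENNReal.ofReal (q ^ 4) *
          ∑' k, ∫⁻ x in Ak k, ENNReal.ofReal ((r ^ 2 / ‖x - p‖ ^ 2) ^ 2) ∂μH[2] :=
          mul_le_mul_right (ENNReal.tsum_le_tsum fun k => hint_lb k) _
  · rw [hsum1, hsum2]
    calc (∑' k, ∫⁻ x in Ak k, ENNReal.ofReal ((r ^ 2 / ‖x - p‖ ^ 2) ^ 2) ∂μH[2])
        ≤ ∑' k, c k * μH[2] (Ak k) := ENNReal.tsum_le_tsum fun k => hint_ub k
      _ = ∑' k, ENNReal.ofReal (q ^ 4) * (c (k + 1) * μH[2] (Ak k)) :=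
          tsum_congr fun k => by rw [hcq k, mul_assoc]
      _ = ENNReal.ofReal (q ^ 4) * ∑' k, c (k + 1) * μH[2] (Ak k) := ENNReal.tsum_mul_left
      _ ≤ ENNReal.ofReal (q ^ 4) * ∑' k, μH[2] (T '' Ak k) :=
          mul_le_mul_right (ENNReal.tsum_le_tsum fun k => (hkey k).1) _
end

section
/- Let r > 0 and let T be the inversion in the sphere of radius r centered at the origin of ℝ³. For x ≠ 0 let R_x := I − 2(x/|x|)(x/|x|)ᵗ be the reflection matrix. Then for all nonzero x, y ∈ ℝ³ with x ≠ y and every n ∈ ℝ³, ⟨R_x n, (Tx − Ty)/(4π|Tx − Ty|³)⟩ = (|x|³|y|/r⁴) ⟨n, (x − y)/(4π|x − y|³)⟩ + (|x||y|/r⁴) ⟨n, x⟩ · (−1/(4π|x − y|)). Equivalently, ⟨R_x n, ∇Γ(Tx − Ty)⟩ = (|x|³|y|/r⁴)⟨n, ∇Γ(x−y)⟩ + (|x||y|/r⁴)⟨n, x⟩ Γ(x−y). -/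
open scoped Real RealInnerProductSpace

/-- Transformation of the gradient of the 3D fundamental solution
`∇Γ(z) = z/(4π|z|³)` under inversion in a sphere centered at the origin:
`⟨R_x n, ∇Γ(Tx − Ty)⟩ = (|x|³|y|/r⁴)⟨n, ∇Γ(x−y)⟩ + (|x||y|/r⁴)⟨n, x⟩ Γ(x−y)`,
where `R_x = I − 2(x/|x|)(x/|x|)ᵗ` is the reflection matrix. -/
theorem grad_fundamental_solution_inversion_dim3
    (r : ℝ) (hr : 0 < r)
    (T : EuclideanSpace ℝ (Fin 3) → EuclideanSpace ℝ (Fin 3))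
    (hT : ∀ x : EuclideanSpace ℝ (Fin 3), x ≠ 0 → T x = (r ^ 2 / ‖x‖ ^ 2) • x)
    (R : EuclideanSpace ℝ (Fin 3) → EuclideanSpace ℝ (Fin 3) → EuclideanSpace ℝ (Fin 3))
    (hR : ∀ x v : EuclideanSpace ℝ (Fin 3), x ≠ 0 →
      R x v = v - (2 * ⟪x, v⟫ / ‖x‖ ^ 2) • x)
    (x y : EuclideanSpace ℝ (Fin 3)) (hx : x ≠ 0) (hy : y ≠ 0) (hxy : x ≠ y)
    (n : EuclideanSpace ℝ (Fin 3)) :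
    ⟪R x n, (4 * π * ‖T x - T y‖ ^ 3)⁻¹ • (T x - T y)⟫ =
      (‖x‖ ^ 3 * ‖y‖ / r ^ 4) * ⟪n, (4 * π * ‖x - y‖ ^ 3)⁻¹ • (x - y)⟫
        + (‖x‖ * ‖y‖ / r ^ 4) * ⟪n, x⟫ * (-1 / (4 * π * ‖x - y‖)) := by
  have ha : (0:ℝ) < ‖x‖ := norm_pos_iff.mpr hx
  have hb : (0:ℝ) < ‖y‖ := norm_pos_iff.mpr hy
  have hs : (0:ℝ) < ‖x - y‖ := by rw [norm_pos_iff]; exact sub_ne_zero.mpr hxy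
  have hπ : (0:ℝ) < π := Real.pi_pos
  rw [hT x hx, hT y hy, hR x n hx]
  have hxy2 : ⟪x, y⟫ = (‖x‖ ^ 2 + ‖y‖ ^ 2 - ‖x - y‖ ^ 2) / 2 := by
    have h := @norm_sub_sq_real (EuclideanSpace ℝ (Fin 3)) _ _ x y
    linarith
  have hnorm : ‖(r ^ 2 / ‖x‖ ^ 2) • x - (r ^ 2 / ‖y‖ ^ 2) • y‖
      = r ^ 2 * ‖x - y‖ / (‖x‖ * ‖y‖) := by
    have h2 : ‖(r ^ 2 / ‖x‖ ^ 2) • x - (r ^ 2 / ‖y‖ ^ 2) • y‖ ^ 2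
        = (r ^ 2 * ‖x - y‖ / (‖x‖ * ‖y‖)) ^ 2 := by
      rw [@norm_sub_sq_real (EuclideanSpace ℝ (Fin 3)) _ _]
      rw [real_inner_smul_left, real_inner_smul_right, norm_smul, norm_smul, hxy2]
      simp only [norm_div, norm_pow, Real.norm_eq_abs, abs_norm, sq_abs]
      field_simp
      ring
    calc ‖(r ^ 2 / ‖x‖ ^ 2) • x - (r ^ 2 / ‖y‖ ^ 2) • y‖
        = Real.sqrt (‖(r ^ 2 / ‖x‖ ^ 2) • x - (r ^ 2 / ‖y‖ ^ 2) • y‖ ^ 2) :=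
          (Real.sqrt_sq (norm_nonneg _)).symm
      _ = Real.sqrt ((r ^ 2 * ‖x - y‖ / (‖x‖ * ‖y‖)) ^ 2) := by rw [h2]
      _ = r ^ 2 * ‖x - y‖ / (‖x‖ * ‖y‖) := Real.sqrt_sq (by positivity)
  rw [hnorm]
  simp only [inner_sub_left, inner_sub_right, real_inner_smul_left, real_inner_smul_right,
    real_inner_self_eq_norm_sq]
  rw [real_inner_comm x n, real_inner_comm y n] at *
  rw [hxy2]
  field_simp
  ring
end

section
/- Let r > 0 and let T be the inversion in the sphere of radius r centered at the origin of ℝ². For x ≠ 0 let R_x := I − 2(x/|x|)(x/|x|)ᵗ be the reflection matrix. Then for all nonzero x, y ∈ ℝ² with x ≠ y and every n ∈ ℝ², ⟨R_x n, (Tx − Ty)/(2π|Tx − Ty|²)⟩ = (|x|²/r²) ⟨n, (x − y)/(2π|x − y|²) − x/(2π|x|²)⟩. Equivalently, ⟨R_x n, ∇Γ(Tx − Ty)⟩ = (|x|²/r²)⟨n, ∇Γ(x−y) − ∇Γ(x)⟩. -/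
set_option maxHeartbeats 1000000

open scoped Real RealInnerProductSpace

/-- Transformation of the gradient of the 2D fundamental solution
`∇Γ(z) = z/(2π|z|²)` under inversion in a sphere centered at the origin:
`⟨R_x n, ∇Γ(Tx − Ty)⟩ = (|x|²/r²)⟨n, ∇Γ(x−y) − ∇Γ(x)⟩`,
where `R_x = I − 2(x/|x|)(x/|x|)ᵗ` is the reflection matrix. -/
theorem grad_fundamental_solution_inversion_dim2
    (r : ℝ) (hr : 0 < r)
    (T : EuclideanSpace ℝ (Fin 2) → EuclideanSpace ℝ (Fin 2))
    (hT : ∀ x : EuclideanSpace ℝ (Fin 2), x ≠ 0 → T x = (r ^ 2 / ‖x‖ ^ 2) • x)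
    (R : EuclideanSpace ℝ (Fin 2) → EuclideanSpace ℝ (Fin 2) → EuclideanSpace ℝ (Fin 2))
    (hR : ∀ x v : EuclideanSpace ℝ (Fin 2), x ≠ 0 →
      R x v = v - (2 * ⟪x, v⟫ / ‖x‖ ^ 2) • x)
    (x y : EuclideanSpace ℝ (Fin 2)) (hx : x ≠ 0) (hy : y ≠ 0) (hxy : x ≠ y)
    (n : EuclideanSpace ℝ (Fin 2)) :
    ⟪R x n, (2 * π * ‖T x - T y‖ ^ 2)⁻¹ • (T x - T y)⟫ =
      (‖x‖ ^ 2 / r ^ 2) *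
        ⟪n, (2 * π * ‖x - y‖ ^ 2)⁻¹ • (x - y) - (2 * π * ‖x‖ ^ 2)⁻¹ • x⟫ := by
  have hπ : (π : ℝ) ≠ 0 := Real.pi_ne_zero
  have hr0 : r ≠ 0 := ne_of_gt hr
  have ha : ‖x‖ ≠ 0 := norm_ne_zero_iff.mpr hx
  have hb : ‖y‖ ≠ 0 := norm_ne_zero_iff.mpr hy
  have hc : ‖x - y‖ ≠ 0 := by simp [sub_eq_zero, hxy]
  rw [hT x hx, hT y hy, hR x n hx]
  have key : ‖(r ^ 2 / ‖x‖ ^ 2) • x - (r ^ 2 / ‖y‖ ^ 2) • y‖ ^ 2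
      = r ^ 4 * ‖x - y‖ ^ 2 / (‖x‖ ^ 2 * ‖y‖ ^ 2) := by
    rw [@norm_sub_sq_real, @norm_sub_sq_real, real_inner_smul_left, real_inner_smul_right,
      norm_smul, norm_smul, mul_pow, mul_pow]
    simp only [Real.norm_eq_abs, sq_abs]
    field_simp
    ring
  rw [key]
  have hxy2 : ‖x - y‖ ^ 2 = ‖x‖ ^ 2 - 2 * ⟪x, y⟫ + ‖y‖ ^ 2 := norm_sub_sq_real x y
  rw [hxy2]
  have hne : ‖x‖ ^ 2 - 2 * ⟪x, y⟫ + ‖y‖ ^ 2 ≠ 0 := by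
    rw [← hxy2]; exact pow_ne_zero 2 hc
  simp only [inner_sub_left, inner_sub_right, real_inner_smul_left, real_inner_smul_right,
    real_inner_self_eq_norm_sq, real_inner_comm x n]
  set a := ‖x‖ with ha'
  set b := ‖y‖ with hb'
  set s := (⟪x, y⟫ : ℝ) with hs'
  set p := (⟪n, x⟫ : ℝ) with hp'
  set q := (⟪n, y⟫ : ℝ) with hq'
  field_simp
  ring
end

section
/- Let Ω ⊆ ℝ³ be a bounded open set whose frontier ∂Ω does not contain the origin, let r > 0, and let T be the inversion in the sphere of radius r centered at the origin. Let σ be the 2-dimensional Hausdorff measure restricted to ∂Ω, and σ* the 2-dimensional Hausdorff measure restricted to ∂Ω* := T(∂Ω). Let φ : ℝ³ → ℝ be bounded and Borel measurable with σ(∂Ω) < ∞, and define φ* on ∂Ω* by φ*(T y) := φ(y)|y|³/r³. Then for every x ∈ ℝ³ with x ≠ 0 such that y ↦ Γ(x − y)φ(y) is σ-integrable, ∫_{∂Ω*} Γ(Tx − z) φ*(z) dσ*(z) = (|x|/r) ∫_{∂Ω} Γ(x − y) φ(y) dσ(y), where Γ(z) = −1/(4π|z|). -/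
open MeasureTheory
open scoped Real ENNReal
open scoped NNReal

set_option linter.unusedVariables false

variable {E : Type*} [NormedAddCommGroup E] [InnerProductSpace ℝ E]

lemma inv_norm (r : ℝ) (hr : 0 < r) {y : E} (hy : y ≠ 0) :
    ‖(r ^ 2 / ‖y‖ ^ 2) • y‖ = r ^ 2 / ‖y‖ := by
  have h : (0:ℝ) < ‖y‖ := norm_pos_iff.2 hy
  rw [norm_smul, Real.norm_eq_abs, abs_of_pos (by positivity)]
  field_simp

lemma inv_dist (r : ℝ) (hr : 0 < r) {y z : E} (hy : y ≠ 0) (hz : z ≠ 0) :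
    ‖(r ^ 2 / ‖y‖ ^ 2) • y - (r ^ 2 / ‖z‖ ^ 2) • z‖ = r ^ 2 * ‖y - z‖ / (‖y‖ * ‖z‖) := by
  have hy' : (0:ℝ) < ‖y‖ := norm_pos_iff.2 hy
  have hz' : (0:ℝ) < ‖z‖ := norm_pos_iff.2 hz
  have hsq : ‖(r ^ 2 / ‖y‖ ^ 2) • y - (r ^ 2 / ‖z‖ ^ 2) • z‖ ^ 2
      = (r ^ 2 * ‖y - z‖ / (‖y‖ * ‖z‖)) ^ 2 := by
    rw [@norm_sub_sq_real]
    have hyz : ‖y - z‖ ^ 2 = ‖y‖ ^ 2 - 2 * inner ℝ y z + ‖z‖ ^ 2 := @norm_sub_sq_real E _ _ y z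
    rw [norm_smul, norm_smul, real_inner_smul_left, real_inner_smul_right]
    rw [Real.norm_eq_abs, Real.norm_eq_abs, abs_of_pos (show (0:ℝ) < r ^ 2 / ‖y‖ ^ 2 by positivity),
      abs_of_pos (show (0:ℝ) < r ^ 2 / ‖z‖ ^ 2 by positivity)]
    rw [div_pow]
    conv_rhs => rw [mul_pow, hyz]
    field_simp
    ring
  have h1 : (0:ℝ) ≤ ‖(r ^ 2 / ‖y‖ ^ 2) • y - (r ^ 2 / ‖z‖ ^ 2) • z‖ := norm_nonneg _
  have h2 : (0:ℝ) ≤ r ^ 2 * ‖y - z‖ / (‖y‖ * ‖z‖) := by positivity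
  nlinarith [hsq]

lemma inv_invol (r : ℝ) (hr : 0 < r) {y : E} (hy : y ≠ 0) :
    (r ^ 2 / ‖(r ^ 2 / ‖y‖ ^ 2) • y‖ ^ 2) • ((r ^ 2 / ‖y‖ ^ 2) • y) = y := by
  have h : (0:ℝ) < ‖y‖ := norm_pos_iff.2 hy
  rw [inv_norm r hr hy, smul_smul]
  have : r ^ 2 / (r ^ 2 / ‖y‖) ^ 2 * (r ^ 2 / ‖y‖ ^ 2) = 1 := by
    field_simp
  rw [this, one_smul]

noncomputable abbrev E3 := EuclideanSpace ℝ (Fin 3)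

noncomputable def Inv3 (r : ℝ) : E3 → E3 := fun y => (r ^ 2 / ‖y‖ ^ 2) • y

lemma inv_lipschitz (r a : ℝ) (hr : 0 < r) (ha : 0 < a) :
    LipschitzOnWith (Real.toNNReal (r ^ 2 / a ^ 2)) (Inv3 r) {y : E3 | a ≤ ‖y‖} := by
  apply LipschitzOnWith.of_dist_le_mul
  intro y hy z hz
  have hy' : a ≤ ‖y‖ := hy
  have hz' : a ≤ ‖z‖ := hz
  have hyne : y ≠ 0 := by intro h; rw [h, norm_zero] at hy'; linarith
  have hzne : z ≠ 0 := by intro h; rw [h, norm_zero] at hz'; linarith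
  rw [dist_eq_norm, dist_eq_norm, show Inv3 r y - Inv3 r z = (r ^ 2 / ‖y‖ ^ 2) • y - (r ^ 2 / ‖z‖ ^ 2) • z from rfl, inv_dist r hr hyne hzne,
    Real.coe_toNNReal _ (by positivity)]
  have h1 : r ^ 2 * ‖y - z‖ / (‖y‖ * ‖z‖) ≤ r ^ 2 * ‖y - z‖ / (a * a) := by
    apply div_le_div_of_nonneg_left (by positivity) (by positivity)
    nlinarith
  calc r ^ 2 * ‖y - z‖ / (‖y‖ * ‖z‖) ≤ r ^ 2 * ‖y - z‖ / (a * a) := h1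
    _ = r ^ 2 / a ^ 2 * ‖y - z‖ := by rw [pow_two]; ring

lemma ennreal_const_pow (t : ℝ) (ht : 0 < t) :
    ((Real.toNNReal t : ℝ≥0∞)) ^ (2 : ℝ) = ENNReal.ofReal (t ^ 2) := by
  have h1 : ((Real.toNNReal t : ℝ≥0∞)) = ENNReal.ofReal t := rfl
  rw [h1, ENNReal.ofReal_rpow_of_pos ht, ← Real.rpow_natCast t 2]
  norm_num

lemma measure_image_le (r a : ℝ) (hr : 0 < r) (ha : 0 < a) (B : Set E3)
    (hB : ∀ y ∈ B, a ≤ ‖y‖) :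
    μH[2] (Inv3 r '' B) ≤ ENNReal.ofReal ((r ^ 2 / a ^ 2) ^ 2) * μH[2] B := by
  have hlip : LipschitzOnWith (Real.toNNReal (r ^ 2 / a ^ 2)) (Inv3 r) B :=
    (inv_lipschitz r a hr ha).mono hB
  have := hlip.hausdorffMeasure_image_le (d := 2) (by norm_num)
  rwa [ennreal_const_pow _ (by positivity)] at this

lemma measure_le_image (r b : ℝ) (hr : 0 < r) (hb : 0 < b) (B : Set E3)
    (hB : ∀ y ∈ B, y ≠ 0 ∧ ‖y‖ ≤ b) :
    μH[2] B ≤ ENNReal.ofReal ((b ^ 2 / r ^ 2) ^ 2) * μH[2] (Inv3 r '' B) := by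
  have hsub : B ⊆ Inv3 r '' (Inv3 r '' B) := by
    intro y hy
    exact ⟨Inv3 r y, Set.mem_image_of_mem _ hy, inv_invol r hr (hB y hy).1⟩
  have hlow : ∀ z ∈ Inv3 r '' B, r ^ 2 / b ≤ ‖z‖ := by
    rintro z ⟨y, hy, rfl⟩
    rw [show Inv3 r y = (r ^ 2 / ‖y‖ ^ 2) • y from rfl, inv_norm r hr (hB y hy).1]
    have hy0 : (0:ℝ) < ‖y‖ := norm_pos_iff.2 (hB y hy).1
    gcongr
    exact (hB y hy).2
  calc μH[2] B ≤ μH[2] (Inv3 r '' (Inv3 r '' B)) := measure_mono hsub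
    _ ≤ ENNReal.ofReal ((r ^ 2 / (r ^ 2 / b) ^ 2) ^ 2) * μH[2] (Inv3 r '' B) :=
        measure_image_le r (r ^ 2 / b) hr (by positivity) _ hlow
    _ = ENNReal.ofReal ((b ^ 2 / r ^ 2) ^ 2) * μH[2] (Inv3 r '' B) := by
        congr 2
        field_simp

lemma exists_annulus {c m t : ℝ} (hc : 1 < c) (hm : 0 < m) (ht : m ≤ t) :
    ∃ k : ℕ, m * c ^ k ≤ t ∧ t < m * c ^ (k + 1) := by
  have hex : ∃ n : ℕ, t < m * c ^ n := by
    obtain ⟨n, hn⟩ := pow_unbounded_of_one_lt (t / m) hc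
    exact ⟨n, by rwa [div_lt_iff₀ hm, mul_comm] at hn⟩
  classical
  have hk₀ : t < m * c ^ (Nat.find hex) := Nat.find_spec hex
  have hk₀pos : Nat.find hex ≠ 0 := by
    intro h
    rw [h, pow_zero, mul_one] at hk₀
    linarith
  refine ⟨Nat.find hex - 1, ?_, ?_⟩
  · have := Nat.find_min hex (show Nat.find hex - 1 < Nat.find hex by omega)
    exact not_lt.1 this
  · have : Nat.find hex - 1 + 1 = Nat.find hex := by omega
    rw [this]
    exact hk₀

lemma ennreal_le_of_forall {A B : ℝ≥0∞} (h : ∀ ε : ℝ, 0 < ε → A ≤ ENNReal.ofReal (1 + ε) * B) :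
    A ≤ B := by
  by_cases hB : B = ∞
  · simp [hB]
  by_cases hB0 : B = 0
  · have := h 1 one_pos
    simpa [hB0] using this
  apply ENNReal.le_of_forall_pos_le_add
  intro ε hε _
  have hBtop : B.toReal ≠ 0 := ENNReal.toReal_ne_zero.2 ⟨hB0, hB⟩
  have hBpos : 0 < B.toReal := lt_of_le_of_ne ENNReal.toReal_nonneg (Ne.symm hBtop)
  set δ : ℝ := (ε : ℝ) / B.toReal with hδ
  have hδpos : 0 < δ := by positivity
  have h2 := h δ hδpos
  have h3 : ENNReal.ofReal (1 + δ) * B = B + ENNReal.ofReal δ * B := by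
    rw [ENNReal.ofReal_add (by norm_num) hδpos.le, add_mul, ENNReal.ofReal_one, one_mul]
  have h4 : ENNReal.ofReal δ * B = (ε : ℝ≥0∞) := by
    conv_lhs => rw [← ENNReal.ofReal_toReal hB]
    rw [← ENNReal.ofReal_mul hδpos.le, hδ, div_mul_cancel₀ _ hBtop, ENNReal.ofReal_coe_nnreal]
  calc A ≤ ENNReal.ofReal (1 + δ) * B := h2
    _ = B + ε := by rw [h3, h4]

lemma inv3_continuousOn (r : ℝ) : ContinuousOn (Inv3 r) {y : E3 | y ≠ 0} := by
  apply ContinuousOn.smul (f := fun y : E3 => r ^ 2 / ‖y‖ ^ 2) (g := id)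
  · apply ContinuousOn.div continuousOn_const ((continuous_norm.pow 2).continuousOn)
    intro y hy
    have h1 : (0:ℝ) < ‖y‖ := norm_pos_iff.2 hy
    exact (pow_pos h1 2).ne'
  · exact continuousOn_id

lemma inv3_injOn (r : ℝ) (hr : 0 < r) : Set.InjOn (Inv3 r) {y : E3 | y ≠ 0} := by
  intro y hy z hz h
  have : Inv3 r (Inv3 r y) = Inv3 r (Inv3 r z) := by rw [h]
  rwa [show Inv3 r (Inv3 r y) = (r ^ 2 / ‖(r ^ 2 / ‖y‖ ^ 2) • y‖ ^ 2) • ((r ^ 2 / ‖y‖ ^ 2) • y) from rfl,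
    show Inv3 r (Inv3 r z) = (r ^ 2 / ‖(r ^ 2 / ‖z‖ ^ 2) • z‖ ^ 2) • ((r ^ 2 / ‖z‖ ^ 2) • z) from rfl,
    inv_invol r hr hy, inv_invol r hr hz] at this

lemma inv3_image_measurable (r : ℝ) (hr : 0 < r) (B : Set E3) (hB : MeasurableSet B)
    (h0 : ∀ y ∈ B, y ≠ 0) : MeasurableSet (Inv3 r '' B) :=
  hB.image_of_continuousOn_injOn ((inv3_continuousOn r).mono h0)
    ((inv3_injOn r hr).mono h0)

lemma inv3_measurable (r : ℝ) : Measurable (Inv3 r) := by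
  apply Measurable.smul (f := fun y : E3 => r ^ 2 / ‖y‖ ^ 2) (g := id)
  · exact measurable_const.div ((measurable_norm).pow measurable_const)
  · exact measurable_id

lemma key_bounds (r m c : ℝ) (hr : 0 < r) (hm : 0 < m) (hc : 1 < c)
    (B : Set E3) (hB : MeasurableSet B) (hBm : ∀ y ∈ B, m ≤ ‖y‖) :
    μH[2] (Inv3 r '' B) ≤ ENNReal.ofReal (c ^ 4) *
        ∫⁻ y in B, ENNReal.ofReal ((r ^ 2 / ‖y‖ ^ 2) ^ 2) ∂μH[2] ∧
    (∫⁻ y in B, ENNReal.ofReal ((r ^ 2 / ‖y‖ ^ 2) ^ 2) ∂μH[2]) ≤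
        ENNReal.ofReal (c ^ 4) * μH[2] (Inv3 r '' B) := by
  have hc0 : 0 < c := lt_trans one_pos hc
  set J : E3 → ℝ≥0∞ := fun y => ENNReal.ofReal ((r ^ 2 / ‖y‖ ^ 2) ^ 2) with hJ
  have hJmeas : Measurable J :=
    ((measurable_const.div ((measurable_norm).pow measurable_const)).pow
      measurable_const).ennreal_ofReal
  set s : ℕ → Set E3 := fun k => B ∩ {y | m * c ^ k ≤ ‖y‖ ∧ ‖y‖ < m * c ^ (k + 1)} with hs
  have hmeas : ∀ k, MeasurableSet (s k) := by
    intro k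
    apply hB.inter
    rw [Set.setOf_and]
    exact (measurableSet_le measurable_const measurable_norm).inter
      (measurableSet_lt measurable_norm measurable_const)
  have hdisj : Pairwise (Function.onFun Disjoint s) := by
    have key : ∀ k l, k < l → Disjoint (s k) (s l) := by
      intro k l hkl
      rw [Set.disjoint_left]
      rintro y ⟨_, _, h2⟩ ⟨_, h3, _⟩
      have : m * c ^ (k + 1) ≤ m * c ^ l :=
        mul_le_mul_of_nonneg_left (pow_le_pow_right₀ hc.le (by omega)) hm.le
      linarith
    intro k l hkl
    rcases lt_or_gt_of_ne hkl with h | h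
    · exact key k l h
    · exact (key l k h).symm
  have hcover : B = ⋃ k, s k := by
    ext y
    constructor
    · intro hy
      obtain ⟨k, h1, h2⟩ := exists_annulus hc hm (hBm y hy)
      exact Set.mem_iUnion.2 ⟨k, hy, h1, h2⟩
    · intro hy
      obtain ⟨k, hk⟩ := Set.mem_iUnion.1 hy
      exact hk.1
  have hapos : ∀ k : ℕ, (0:ℝ) < m * c ^ k := fun k => by positivity
  have hne : ∀ k, ∀ y ∈ s k, y ≠ 0 := by
    intro k y hy h0
    have := hy.2.1
    rw [h0, norm_zero] at this
    nlinarith [hapos k]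
  have id1 : ∀ k : ℕ, (r ^ 2 / (m * c ^ k) ^ 2) ^ 2
      = c ^ 4 * (r ^ 2 / (m * c ^ (k + 1)) ^ 2) ^ 2 := by
    intro k
    rw [pow_succ]
    have h1 : m * c ^ k ≠ 0 := (hapos k).ne'
    field_simp
    ring
  have id2 : ∀ k : ℕ, (r ^ 2 / (m * c ^ k) ^ 2) ^ 2 * ((m * c ^ (k + 1)) ^ 2 / r ^ 2) ^ 2
      = c ^ 4 := by
    intro k
    rw [pow_succ]
    have h1 : m * c ^ k ≠ 0 := (hapos k).ne'
    field_simp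
    ring
  have hup : ∀ k, μH[2] (Inv3 r '' s k) ≤ ENNReal.ofReal (c ^ 4) * ∫⁻ y in s k, J y ∂μH[2] := by
    intro k
    calc μH[2] (Inv3 r '' s k)
        ≤ ENNReal.ofReal ((r ^ 2 / (m * c ^ k) ^ 2) ^ 2) * μH[2] (s k) :=
          measure_image_le r (m * c ^ k) hr (hapos k) _ (fun y hy => hy.2.1)
      _ = ENNReal.ofReal (c ^ 4) *
          (ENNReal.ofReal ((r ^ 2 / (m * c ^ (k + 1)) ^ 2) ^ 2) * μH[2] (s k)) := by
          rw [← mul_assoc, ← ENNReal.ofReal_mul (by positivity), ← id1 k]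
      _ ≤ ENNReal.ofReal (c ^ 4) * ∫⁻ y in s k, J y ∂μH[2] := by
          gcongr
          rw [← setLIntegral_const]
          apply setLIntegral_mono hJmeas
          intro y hy
          apply ENNReal.ofReal_le_ofReal
          have hy0 : (0:ℝ) < ‖y‖ := lt_of_lt_of_le (hapos k) hy.2.1
          have h1 : r ^ 2 / (m * c ^ (k + 1)) ^ 2 ≤ r ^ 2 / ‖y‖ ^ 2 :=
            div_le_div_of_nonneg_left (by positivity) (by positivity)
              (by nlinarith [hy.2.2, hapos (k + 1)])
          exact pow_le_pow_left₀ (by positivity) h1 2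
  have hlo : ∀ k, (∫⁻ y in s k, J y ∂μH[2]) ≤ ENNReal.ofReal (c ^ 4) * μH[2] (Inv3 r '' s k) := by
    intro k
    calc (∫⁻ y in s k, J y ∂μH[2])
        ≤ ENNReal.ofReal ((r ^ 2 / (m * c ^ k) ^ 2) ^ 2) * μH[2] (s k) := by
          rw [← setLIntegral_const]
          apply setLIntegral_mono measurable_const
          intro y hy
          apply ENNReal.ofReal_le_ofReal
          have hy0 : (0:ℝ) < ‖y‖ := lt_of_lt_of_le (hapos k) hy.2.1
          have h1 : r ^ 2 / ‖y‖ ^ 2 ≤ r ^ 2 / (m * c ^ k) ^ 2 :=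
            div_le_div_of_nonneg_left (by positivity) (by positivity)
              (by nlinarith [hy.2.1, hapos k])
          exact pow_le_pow_left₀ (by positivity) h1 2
      _ ≤ ENNReal.ofReal ((r ^ 2 / (m * c ^ k) ^ 2) ^ 2) *
          (ENNReal.ofReal (((m * c ^ (k + 1)) ^ 2 / r ^ 2) ^ 2) * μH[2] (Inv3 r '' s k)) := by
          gcongr
          exact measure_le_image r (m * c ^ (k + 1)) hr (hapos (k + 1)) _
            (fun y hy => ⟨hne k y hy, hy.2.2.le⟩)
      _ = ENNReal.ofReal (c ^ 4) * μH[2] (Inv3 r '' s k) := by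
          rw [← mul_assoc, ← ENNReal.ofReal_mul (by positivity), id2 k]
  have himgmeas : ∀ k, MeasurableSet (Inv3 r '' s k) :=
    fun k => inv3_image_measurable r hr _ (hmeas k) (hne k)
  have himgdisj : Pairwise (Function.onFun Disjoint (fun k => Inv3 r '' s k)) := by
    intro k l hkl
    rw [Function.onFun, Set.disjoint_left]
    rintro z ⟨y, hy, rfl⟩ ⟨y', hy', heq⟩
    have hyy : y' = y := inv3_injOn r hr (hne l y' hy') (hne k y hy) heq
    subst hyy
    exact Set.disjoint_left.1 (hdisj hkl) hy hy'
  have hsum : (∫⁻ y in B, J y ∂μH[2]) = ∑' k, ∫⁻ y in s k, J y ∂μH[2] := by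
    conv_lhs => rw [hcover]
    exact lintegral_iUnion hmeas hdisj _
  constructor
  · calc μH[2] (Inv3 r '' B) = μH[2] (⋃ k, Inv3 r '' s k) := by rw [hcover, Set.image_iUnion]
      _ ≤ ∑' k, μH[2] (Inv3 r '' s k) := measure_iUnion_le _
      _ ≤ ∑' k, ENNReal.ofReal (c ^ 4) * ∫⁻ y in s k, J y ∂μH[2] := ENNReal.tsum_le_tsum hup
      _ = ENNReal.ofReal (c ^ 4) * ∑' k, ∫⁻ y in s k, J y ∂μH[2] := ENNReal.tsum_mul_left
      _ = ENNReal.ofReal (c ^ 4) * ∫⁻ y in B, J y ∂μH[2] := by rw [hsum]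
  · calc (∫⁻ y in B, J y ∂μH[2]) = ∑' k, ∫⁻ y in s k, J y ∂μH[2] := hsum
      _ ≤ ∑' k, ENNReal.ofReal (c ^ 4) * μH[2] (Inv3 r '' s k) := ENNReal.tsum_le_tsum hlo
      _ = ENNReal.ofReal (c ^ 4) * ∑' k, μH[2] (Inv3 r '' s k) := ENNReal.tsum_mul_left
      _ = ENNReal.ofReal (c ^ 4) * μH[2] (⋃ k, Inv3 r '' s k) := by
          rw [measure_iUnion himgdisj himgmeas]
      _ = ENNReal.ofReal (c ^ 4) * μH[2] (Inv3 r '' B) := by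
          rw [← Set.image_iUnion, ← hcover]

lemma key_measure (r m : ℝ) (hr : 0 < r) (hm : 0 < m) (B : Set E3) (hB : MeasurableSet B)
    (hBm : ∀ y ∈ B, m ≤ ‖y‖) :
    μH[2] (Inv3 r '' B) = ∫⁻ y in B, ENNReal.ofReal ((r ^ 2 / ‖y‖ ^ 2) ^ 2) ∂μH[2] := by
  have hcε : ∀ ε : ℝ, 0 < ε → ∃ c : ℝ, 1 < c ∧ c ^ 4 ≤ 1 + ε := by
    intro ε hε
    have h1 : min ε 1 ≤ ε := min_le_left _ _
    have h2 : min ε 1 ≤ 1 := min_le_right _ _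
    have h3 : 0 < min ε 1 := lt_min hε one_pos
    refine ⟨1 + min ε 1 / 15, by linarith, ?_⟩
    set d := min ε 1
    nlinarith [sq_nonneg d, sq_nonneg (d*d), pow_pos h3 3, pow_pos h3 4]
  apply le_antisymm
  · apply ennreal_le_of_forall
    intro ε hε
    obtain ⟨c, hc, hc4⟩ := hcε ε hε
    exact le_trans (key_bounds r m c hr hm hc B hB hBm).1
      (mul_le_mul_left (ENNReal.ofReal_le_ofReal hc4) _)
  · apply ennreal_le_of_forall
    intro ε hε
    obtain ⟨c, hc, hc4⟩ := hcε ε hε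
    exact le_trans (key_bounds r m c hr hm hc B hB hBm).2
      (mul_le_mul_left (ENNReal.ofReal_le_ofReal hc4) _)


/-- Transformation of the single layer potential in `ℝ³` under inversion in a sphere
centered at the origin: with `Γ(z) = −1/(4π|z|)`, `φ*(Ty) = φ(y)|y|³/r³`,
`S_{∂Ω*}[φ*](Tx) = (|x|/r) S_{∂Ω}[φ](x)`. -/
theorem single_layer_inversion_dim3
    (r : ℝ) (hr : 0 < r) (Ω : Set (EuclideanSpace ℝ (Fin 3)))
    (hopen : IsOpen Ω) (hbd : Bornology.IsBounded Ω)
    (h0 : (0 : EuclideanSpace ℝ (Fin 3)) ∉ frontier Ω)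
    (T : EuclideanSpace ℝ (Fin 3) → EuclideanSpace ℝ (Fin 3))
    (hT : ∀ x : EuclideanSpace ℝ (Fin 3), x ≠ 0 → T x = (r ^ 2 / ‖x‖ ^ 2) • x)
    (σ σs : Measure (EuclideanSpace ℝ (Fin 3)))
    (hσ : σ = μH[2].restrict (frontier Ω))
    (hσs : σs = μH[2].restrict (T '' frontier Ω))
    (hfin : σ (frontier Ω) < ⊤)
    (φ : EuclideanSpace ℝ (Fin 3) → ℝ) (hφmeas : Measurable φ)
    (hφbdd : ∃ C, ∀ y, |φ y| ≤ C)
    (φs : EuclideanSpace ℝ (Fin 3) → ℝ)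
    (hφs : ∀ y ∈ frontier Ω, φs (T y) = φ y * ‖y‖ ^ 3 / r ^ 3)
    (x : EuclideanSpace ℝ (Fin 3)) (hx : x ≠ 0)
    (hint : Integrable (fun y => (-1 / (4 * π * ‖x - y‖)) * φ y) σ) :
    ∫ z, (-1 / (4 * π * ‖T x - z‖)) * φs z ∂σs =
      (‖x‖ / r) * ∫ y, (-1 / (4 * π * ‖x - y‖)) * φ y ∂σ := by
  set F := frontier Ω with hF
  have hFclosed : IsClosed F := isClosed_frontier
  have hFmeas : MeasurableSet F := hFclosed.measurableSet
  -- a positive lower bound on the norm over F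
  obtain ⟨m, hm, hmF⟩ : ∃ m > 0, ∀ y ∈ F, m ≤ ‖y‖ := by
    have hopen' : IsOpen Fᶜ := hFclosed.isOpen_compl
    obtain ⟨m, hm, hball⟩ := Metric.isOpen_iff.1 hopen' 0 h0
    refine ⟨m, hm, fun y hy => ?_⟩
    by_contra h
    push_neg at h
    exact (hball (by simpa [dist_eq_norm] using h)) hy
  have hne0 : ∀ y ∈ F, y ≠ 0 := by
    intro y hy h
    have := hmF y hy
    rw [h, norm_zero] at this
    linarith
  have hxn : (0:ℝ) < ‖x‖ := norm_pos_iff.2 hx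
  have hTF : ∀ y ∈ F, T y = Inv3 r y := fun y hy => hT y (hne0 y hy)
  have hTx : T x = Inv3 r x := hT x hx
  have himg : T '' F = Inv3 r '' F := Set.image_congr hTF
  have hmapmeas : Measurable (Inv3 r) := inv3_measurable r
  have hIFcpt : IsCompact (Inv3 r '' F) := by
    have hFcpt : IsCompact F :=
      Metric.isCompact_of_isClosed_isBounded hFclosed (hbd.closure.subset frontier_subset_closure)
    exact hFcpt.image_of_continuousOn ((inv3_continuousOn r).mono hne0)
  have hIFmeas : MeasurableSet (Inv3 r '' F) := hIFcpt.isClosed.measurableSet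
  -- the transformed measure
  set ν : Measure E3 :=
    (μH[2].restrict F).withDensity (fun y => ENNReal.ofReal ((r ^ 2 / ‖y‖ ^ 2) ^ 2)) with hν
  have hmeq : σs = Measure.map (Inv3 r) ν := by
    rw [hσs, himg]
    ext S hS
    rw [Measure.map_apply hmapmeas hS, Measure.restrict_apply hS, hν,
      withDensity_apply _ (hmapmeas hS), Measure.restrict_restrict (hmapmeas hS)]
    rw [← key_measure r m hr hm _ (((hmapmeas hS).inter hFmeas))
      (fun y hy => hmF y hy.2)]
    congr 1
    ext z
    constructor
    · rintro ⟨hzS, y, hyF, rfl⟩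
      exact ⟨y, ⟨hzS, hyF⟩, rfl⟩
    · rintro ⟨y, ⟨hyS, hyF⟩, rfl⟩
      exact ⟨hyS, y, hyF, rfl⟩
  -- replace φs by a measurable representative
  set g' : E3 → ℝ := fun z =>
    (-1 / (4 * π * ‖T x - z‖)) * (φ (Inv3 r z) * ‖Inv3 r z‖ ^ 3 / r ^ 3) with hg'
  have hg'meas : Measurable g' := by
    apply Measurable.mul
    · exact measurable_const.div
        (measurable_const.mul ((measurable_const.sub measurable_id).norm))
    · exact ((hφmeas.comp hmapmeas).mul ((hmapmeas.norm).pow measurable_const)).div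
        measurable_const
  have hae : (fun z => (-1 / (4 * π * ‖T x - z‖)) * φs z) =ᵐ[σs] g' := by
    rw [Filter.eventuallyEq_iff_exists_mem]
    refine ⟨Inv3 r '' F, ?_, ?_⟩
    · rw [mem_ae_iff, hσs, himg, Measure.restrict_apply (hIFmeas.compl)]
      simp
    · rintro z ⟨y, hyF, rfl⟩
      have h1 : φs (Inv3 r y) = φ y * ‖y‖ ^ 3 / r ^ 3 := by
        rw [← hTF y hyF]
        exact hφs y hyF
      have h2 : Inv3 r (Inv3 r y) = y := inv_invol r hr (hne0 y hyF)
      simp only [hg', h1, h2]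
  rw [integral_congr_ae hae, hmeq,
    integral_map hmapmeas.aemeasurable hg'meas.aestronglyMeasurable]
  -- unfold the density
  have hJn : Measurable fun y : E3 => Real.toNNReal ((r ^ 2 / ‖y‖ ^ 2) ^ 2) :=
    ((measurable_const.div ((measurable_norm).pow measurable_const)).pow
      measurable_const).real_toNNReal
  have hνd : ν = (μH[2].restrict F).withDensity
      (fun y => ((Real.toNNReal ((r ^ 2 / ‖y‖ ^ 2) ^ 2) : ℝ≥0) : ℝ≥0∞)) := rfl
  rw [hνd, integral_withDensity_eq_integral_smul hJn]
  -- pointwise identity on F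
  have hpt : ∀ y ∈ F,
      Real.toNNReal ((r ^ 2 / ‖y‖ ^ 2) ^ 2) • g' (Inv3 r y)
        = (‖x‖ / r) * ((-1 / (4 * π * ‖x - y‖)) * φ y) := by
    intro y hyF
    have hyne : y ≠ 0 := hne0 y hyF
    have hyn : (0:ℝ) < ‖y‖ := norm_pos_iff.2 hyne
    have h2 : Inv3 r (Inv3 r y) = y := inv_invol r hr hyne
    have hco : (Real.toNNReal ((r ^ 2 / ‖y‖ ^ 2) ^ 2) : ℝ) = (r ^ 2 / ‖y‖ ^ 2) ^ 2 :=
      Real.coe_toNNReal _ (by positivity)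
    rw [NNReal.smul_def, smul_eq_mul, hco, hg']
    simp only [h2, hTx]
    by_cases hxy : x = y
    · subst hxy
      simp [sub_self, norm_zero, mul_zero, div_zero]
    · have hdist : ‖Inv3 r x - Inv3 r y‖ = r ^ 2 * ‖x - y‖ / (‖x‖ * ‖y‖) :=
        inv_dist r hr hx hyne
      have hxyn : (0:ℝ) < ‖x - y‖ := norm_pos_iff.2 (sub_ne_zero.2 hxy)
      rw [show Inv3 r x - Inv3 r y = (r ^ 2 / ‖x‖ ^ 2) • x - (r ^ 2 / ‖y‖ ^ 2) • y from rfl]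
        at hdist ⊢
      rw [hdist]
      have hπ : (0:ℝ) < π := Real.pi_pos
      field_simp
  have haeF : ∀ᵐ y ∂(μH[2].restrict F),
      Real.toNNReal ((r ^ 2 / ‖y‖ ^ 2) ^ 2) • g' (Inv3 r y)
        = (‖x‖ / r) * ((-1 / (4 * π * ‖x - y‖)) * φ y) :=
    (ae_restrict_mem hFmeas).mono fun y hy => hpt y hy
  rw [integral_congr_ae haeF, hσ]
  exact integral_const_mul _ _
end

section
/- Let Ω ⊆ ℝ³ be a bounded open set with 0 ∉ ∂Ω, r > 0, T the inversion in the sphere of radius r centered at the origin, σ the 2-dimensional Hausdorff measure restricted to ∂Ω, and σ* the 2-dimensional Hausdorff measure restricted to ∂Ω* := T(∂Ω). Let φ, ψ : ℝ³ → ℝ be bounded Borel measurable with σ(∂Ω) < ∞, and define φ*(T y) := φ(y)|y|³/r³ and ψ*(T y) := ψ(y)|y|³/r³ on ∂Ω*. If (x,y) ↦ Γ(x − y)φ(x)ψ(y) is integrable with respect to σ × σ, then ∫_{∂Ω*}∫_{∂Ω*} Γ(w − z) φ*(w) ψ*(z) dσ*(z) dσ*(w) = ∫_{∂Ω}∫_{∂Ω}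 Γ(x − y) φ(x) ψ(y) dσ(y) dσ(x), where Γ(z) = −1/(4π|z|). (Hence the map φ ↦ φ* preserves the single-layer-potential bilinear form ⟨φ,ψ⟩ = −∫ φ S[ψ] dσ in three dimensions.) -/
open MeasureTheory Set
open scoped Real ENNReal NNReal

noncomputable section
namespace InvThm

abbrev V := EuclideanSpace ℝ (Fin 3)

def inv3 (r : ℝ) (x : V) : V := (r ^ 2 / ‖x‖ ^ 2) • x

lemma inv3_zero (r : ℝ) : inv3 r 0 = 0 := by simp [inv3]

lemma norm_inv3 {r : ℝ} (hr : 0 < r) (x : V) : ‖inv3 r x‖ = r ^ 2 / ‖x‖ := by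
  rcases eq_or_ne x 0 with h | h
  · simp [h, inv3]
  · have hx : (0:ℝ) < ‖x‖ := norm_pos_iff.2 h
    rw [inv3, norm_smul, Real.norm_eq_abs, abs_of_nonneg (by positivity)]
    field_simp

lemma inv3_invol {r : ℝ} (hr : 0 < r) (x : V) : inv3 r (inv3 r x) = x := by
  rcases eq_or_ne x 0 with h | h
  · simp [h, inv3]
  · have hx : (0:ℝ) < ‖x‖ := norm_pos_iff.2 h
    rw [inv3, norm_inv3 hr, inv3, smul_smul]
    have : r ^ 2 / (r ^ 2 / ‖x‖) ^ 2 * (r ^ 2 / ‖x‖ ^ 2) = 1 := by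
      field_simp
    rw [this, one_smul]

lemma inv3_ne_zero {r : ℝ} (hr : 0 < r) {x : V} (hx : x ≠ 0) : inv3 r x ≠ 0 := by
  intro h
  have := norm_inv3 hr x
  rw [h, norm_zero] at this
  have hx' : (0:ℝ) < ‖x‖ := norm_pos_iff.2 hx
  have : r ^ 2 = 0 := by field_simp at this; linarith [this]
  nlinarith

lemma norm_inv3_sub {r : ℝ} (hr : 0 < r) {x y : V} (hx : x ≠ 0) (hy : y ≠ 0) :
    ‖inv3 r x - inv3 r y‖ = r ^ 2 / (‖x‖ * ‖y‖) * ‖x - y‖ := by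
  have hx' : (0:ℝ) < ‖x‖ := norm_pos_iff.2 hx
  have hy' : (0:ℝ) < ‖y‖ := norm_pos_iff.2 hy
  have hsq : ‖inv3 r x - inv3 r y‖ ^ 2 = (r ^ 2 / (‖x‖ * ‖y‖) * ‖x - y‖) ^ 2 := by
    rw [@norm_sub_sq_real V, mul_pow, @norm_sub_sq_real V]
    rw [norm_inv3 hr, norm_inv3 hr, inv3, inv3, real_inner_smul_left,
      real_inner_smul_right]
    field_simp
    ring
  have h1 : (0:ℝ) ≤ ‖inv3 r x - inv3 r y‖ := norm_nonneg _
  have h2 : (0:ℝ) ≤ r ^ 2 / (‖x‖ * ‖y‖) * ‖x - y‖ := by positivity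
  nlinarith [hsq]

end InvThm

namespace InvThm2
open InvThm

lemma inv3_injective {r : ℝ} (hr : 0 < r) : Function.Injective (inv3 r) :=
  Function.LeftInverse.injective (g := inv3 r) (inv3_invol hr)

lemma measurable_inv3 (r : ℝ) : Measurable (inv3 r) := by
  change Measurable ((fun x : V => r ^ 2 / ‖x‖ ^ 2) • (id : V → V))
  apply Measurable.smul
  · exact measurable_const.div (measurable_norm.pow_const 2)
  · exact measurable_id

def inv3Equiv (r : ℝ) (hr : 0 < r) : V ≃ᵐ V where
  toFun := inv3 r
  invFun := inv3 r
  left_inv := inv3_invol hr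
  right_inv := inv3_invol hr
  measurable_toFun := measurable_inv3 r
  measurable_invFun := measurable_inv3 r

lemma lipschitzOnWith_inv3 {r c : ℝ} (hr : 0 < r) (hc : 0 < c) {E : Set V}
    (hE : ∀ x ∈ E, c ≤ ‖x‖) :
    LipschitzOnWith (r ^ 2 / c ^ 2).toNNReal (inv3 r) E := by
  apply LipschitzOnWith.of_dist_le_mul
  intro x hx y hy
  have hxc := hE x hx
  have hyc := hE y hy
  have hx0 : x ≠ 0 := by intro h; rw [h, norm_zero] at hxc; linarith
  have hy0 : y ≠ 0 := by intro h; rw [h, norm_zero] at hyc; linarith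
  rw [dist_eq_norm, dist_eq_norm, norm_inv3_sub hr hx0 hy0,
    Real.coe_toNNReal _ (by positivity : (0:ℝ) ≤ r ^ 2 / c ^ 2)]
  have h1 : c ^ 2 ≤ ‖x‖ * ‖y‖ := by nlinarith
  gcongr

lemma piece_upper {r c : ℝ} (hr : 0 < r) (hc : 0 < c) {E : Set V}
    (hE : ∀ x ∈ E, c ≤ ‖x‖) :
    μH[2] (inv3 r '' E) ≤ ENNReal.ofReal ((r ^ 2 / c ^ 2) ^ 2) * μH[2] E := by
  have h := (lipschitzOnWith_inv3 hr hc hE).hausdorffMeasure_image_le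
    (by norm_num : (0:ℝ) ≤ 2)
  have hK : (((r ^ 2 / c ^ 2).toNNReal : ℝ≥0∞)) ^ (2:ℝ) =
      ENNReal.ofReal ((r ^ 2 / c ^ 2) ^ 2) := by
    rw [show (2:ℝ) = ((2:ℕ):ℝ) by norm_num, ENNReal.rpow_natCast,
      ENNReal.ofReal, Real.toNNReal_pow (by positivity), ENNReal.coe_pow]
  rwa [hK] at h

lemma piece_lower {r c d : ℝ} (hr : 0 < r) (hc : 0 < c) (hd : 0 < d) {E : Set V}
    (hE : ∀ x ∈ E, c ≤ ‖x‖ ∧ ‖x‖ ≤ d) :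
    ENNReal.ofReal ((r ^ 2 / d ^ 2) ^ 2) * μH[2] E ≤ μH[2] (inv3 r '' E) := by
  set F : Set V := inv3 r '' E with hF
  have hF2 : ∀ w ∈ F, r ^ 2 / d ≤ ‖w‖ := by
    rintro w ⟨x, hx, rfl⟩
    obtain ⟨hxc, hxd⟩ := hE x hx
    have hx0 : (0:ℝ) < ‖x‖ := lt_of_lt_of_le hc hxc
    rw [norm_inv3 hr]
    gcongr
  have hupp := piece_upper hr (by positivity : (0:ℝ) < r ^ 2 / d) hF2
  have hFF : inv3 r '' F = E := by
    rw [hF, Set.image_image]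
    simp [inv3_invol hr]
  rw [hFF] at hupp
  calc ENNReal.ofReal ((r ^ 2 / d ^ 2) ^ 2) * μH[2] E
      ≤ ENNReal.ofReal ((r ^ 2 / d ^ 2) ^ 2) *
        (ENNReal.ofReal ((r ^ 2 / (r ^ 2 / d) ^ 2) ^ 2) * μH[2] F) := by
        exact mul_le_mul_right hupp _
    _ = μH[2] F := by
        rw [← mul_assoc, ← ENNReal.ofReal_mul (by positivity)]
        have : (r ^ 2 / d ^ 2) ^ 2 * (r ^ 2 / (r ^ 2 / d) ^ 2) ^ 2 = 1 := by
          field_simp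
        rw [this, ENNReal.ofReal_one, one_mul]

end InvThm2

namespace InvThm3
open InvThm InvThm2 Filter

/-- Squeeze in ℝ≥0∞. -/
lemma squeeze_aux {X L : ℝ≥0∞}
    (h : ∀ t : ℝ, 1 < t → X ≤ ENNReal.ofReal (t ^ 4) * L) : X ≤ L := by
  rcases eq_top_or_lt_top L with hL | hL
  · simp [hL]
  · have h1 : Tendsto (fun t : ℝ => ENNReal.ofReal (t ^ 4) * L) (nhdsWithin 1 (Set.Ioi 1))
        (nhds (1 * L)) := by
      apply ENNReal.Tendsto.mul_const _ (Or.inr hL.ne)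
      have : Tendsto (fun t : ℝ => ENNReal.ofReal (t ^ 4)) (nhds 1) (nhds 1) := by
        have hc : Continuous (fun t : ℝ => ENNReal.ofReal (t ^ 4)) :=
          ENNReal.continuous_ofReal.comp (continuous_pow 4)
        simpa using hc.tendsto 1
      exact this.mono_left nhdsWithin_le_nhds
    rw [one_mul] at h1
    refine ge_of_tendsto h1 ?_
    filter_upwards [self_mem_nhdsWithin] with t ht
    exact h t ht

/-- Core change of variables: 2-dim Hausdorff measure under inversion. -/
lemma hausdorff_image_inv3 {r : ℝ} (hr : 0 < r) {E : Set V} (hE : MeasurableSet E)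
    (h0 : ∀ x ∈ E, x ≠ 0) :
    μH[2] (inv3 r '' E) = ∫⁻ x in E, ENNReal.ofReal ((r ^ 2 / ‖x‖ ^ 2) ^ 2) ∂μH[2] := by
  set D : V → ℝ≥0∞ := fun x => ENNReal.ofReal ((r ^ 2 / ‖x‖ ^ 2) ^ 2) with hD
  have hDmeas : Measurable D := by
    apply ENNReal.measurable_ofReal.comp
    exact (measurable_const.div (measurable_norm.pow_const 2)).pow_const 2
  -- main two-sided estimate for fixed t > 1
  have key : ∀ t : ℝ, 1 < t →
      μH[2] (inv3 r '' E) ≤ ENNReal.ofReal (t ^ 4) * ∫⁻ x in E, D x ∂μH[2] ∧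
      (∫⁻ x in E, D x ∂μH[2]) ≤ ENNReal.ofReal (t ^ 4) * μH[2] (inv3 r '' E) := by
    intro t ht
    have ht0 : (0:ℝ) < t := lt_trans one_pos ht
    set A : ℤ → Set V := fun k => E ∩ {x : V | t ^ k ≤ ‖x‖ ∧ ‖x‖ < t ^ (k + 1)} with hA
    have hAmeas : ∀ k, MeasurableSet (A k) := by
      intro k
      exact hE.inter ((measurableSet_le measurable_const measurable_norm).inter
        (measurableSet_lt measurable_norm measurable_const))
    have hAdisj : Pairwise (Function.onFun Disjoint A) := by
      intro k l hkl
      rw [Function.onFun, Set.disjoint_left]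
      rintro x ⟨-, hxk1, hxk2⟩ ⟨-, hxl1, hxl2⟩
      rcases lt_or_gt_of_ne hkl with h | h
      · have : t ^ (k + 1) ≤ t ^ l := zpow_le_zpow_right₀ ht.le (by omega)
        linarith
      · have : t ^ (l + 1) ≤ t ^ k := zpow_le_zpow_right₀ ht.le (by omega)
        linarith
    have hAcover : E = ⋃ k, A k := by
      ext x
      constructor
      · intro hx
        have hx0 : (0:ℝ) < ‖x‖ := norm_pos_iff.2 (h0 x hx)
        obtain ⟨k, hk1, hk2⟩ := exists_mem_Ico_zpow hx0 ht
        exact Set.mem_iUnion.2 ⟨k, hx, hk1, hk2⟩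
      · rintro ⟨s, ⟨k, rfl⟩, hx, -⟩
        exact hx
    -- per-piece bounds
    have hbounds : ∀ k : ℤ,
        μH[2] (inv3 r '' A k) ≤ ENNReal.ofReal (t ^ 4) * ∫⁻ x in A k, D x ∂μH[2] ∧
        (∫⁻ x in A k, D x ∂μH[2]) ≤ ENNReal.ofReal (t ^ 4) * μH[2] (inv3 r '' A k) := by
      intro k
      set c : ℝ := t ^ k with hc
      set d : ℝ := t ^ (k + 1) with hd
      have hc0 : (0:ℝ) < c := zpow_pos ht0 _
      have hd0 : (0:ℝ) < d := zpow_pos ht0 _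
      have hdc : d = t * c := by rw [hc, hd, zpow_add_one₀ (ne_of_gt ht0)]; ring
      have hmem : ∀ x ∈ A k, c ≤ ‖x‖ ∧ ‖x‖ ≤ d := fun x hx => ⟨hx.2.1, hx.2.2.le⟩
      have hup := piece_upper hr hc0 (fun x hx => (hmem x hx).1)
      have hlow := piece_lower hr hc0 hd0 hmem
      -- pointwise bounds on density
      have hDup : ∀ x ∈ A k, D x ≤ ENNReal.ofReal ((r ^ 2 / c ^ 2) ^ 2) := by
        intro x hx
        obtain ⟨h1, h2⟩ := hmem x hx
        apply ENNReal.ofReal_le_ofReal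
        have hx0 : (0:ℝ) < ‖x‖ := lt_of_lt_of_le hc0 h1
        gcongr <;> positivity
      have hDlow : ∀ x ∈ A k, ENNReal.ofReal ((r ^ 2 / d ^ 2) ^ 2) ≤ D x := by
        intro x hx
        obtain ⟨h1, h2⟩ := hmem x hx
        apply ENNReal.ofReal_le_ofReal
        have hx0 : (0:ℝ) < ‖x‖ := lt_of_lt_of_le hc0 h1
        gcongr <;> positivity
      have hintup : (∫⁻ x in A k, D x ∂μH[2]) ≤
          ENNReal.ofReal ((r ^ 2 / c ^ 2) ^ 2) * μH[2] (A k) := by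
        calc (∫⁻ x in A k, D x ∂μH[2])
            ≤ ∫⁻ _ in A k, ENNReal.ofReal ((r ^ 2 / c ^ 2) ^ 2) ∂μH[2] :=
              setLIntegral_mono measurable_const hDup
          _ = ENNReal.ofReal ((r ^ 2 / c ^ 2) ^ 2) * μH[2] (A k) := setLIntegral_const _ _
      have hintlow : ENNReal.ofReal ((r ^ 2 / d ^ 2) ^ 2) * μH[2] (A k) ≤
          ∫⁻ x in A k, D x ∂μH[2] := by
        calc ENNReal.ofReal ((r ^ 2 / d ^ 2) ^ 2) * μH[2] (A k)
            = ∫⁻ _ in A k, ENNReal.ofReal ((r ^ 2 / d ^ 2) ^ 2) ∂μH[2] :=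
              (setLIntegral_const _ _).symm
          _ ≤ ∫⁻ x in A k, D x ∂μH[2] := setLIntegral_mono hDmeas hDlow
      -- algebra: (r²/c²)² = t⁴ (r²/d²)²
      have halg : (r ^ 2 / c ^ 2) ^ 2 = t ^ 4 * (r ^ 2 / d ^ 2) ^ 2 := by
        rw [hdc]
        field_simp
      constructor
      · calc μH[2] (inv3 r '' A k) ≤ ENNReal.ofReal ((r ^ 2 / c ^ 2) ^ 2) * μH[2] (A k) := hup
          _ = ENNReal.ofReal (t ^ 4) * (ENNReal.ofReal ((r ^ 2 / d ^ 2) ^ 2) * μH[2] (A k)) := by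
              rw [← mul_assoc, ← ENNReal.ofReal_mul (by positivity), ← halg]
          _ ≤ ENNReal.ofReal (t ^ 4) * ∫⁻ x in A k, D x ∂μH[2] :=
              mul_le_mul_right hintlow _
      · calc (∫⁻ x in A k, D x ∂μH[2])
            ≤ ENNReal.ofReal ((r ^ 2 / c ^ 2) ^ 2) * μH[2] (A k) := hintup
          _ = ENNReal.ofReal (t ^ 4) * (ENNReal.ofReal ((r ^ 2 / d ^ 2) ^ 2) * μH[2] (A k)) := by
              rw [← mul_assoc, ← ENNReal.ofReal_mul (by positivity), ← halg]
          _ ≤ ENNReal.ofReal (t ^ 4) * μH[2] (inv3 r '' A k) :=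
              mul_le_mul_right hlow _
    -- sum up
    have himg : inv3 r '' E = ⋃ k, inv3 r '' A k := by
      rw [hAcover, Set.image_iUnion]
    have himgmeas : ∀ k, MeasurableSet (inv3 r '' A k) := by
      intro k
      rw [show inv3 r '' A k = inv3 r ⁻¹' A k from ?_]
      · exact measurable_inv3 r (hAmeas k)
      · ext w
        constructor
        · rintro ⟨x, hx, rfl⟩; simpa [Set.mem_preimage, inv3_invol hr] using hx
        · intro hw; exact ⟨inv3 r w, hw, inv3_invol hr w⟩
    have himgdisj : Pairwise (Function.onFun Disjoint (fun k => inv3 r '' A k)) := by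
      intro k l hkl
      exact Set.disjoint_image_of_injective (inv3_injective hr) (hAdisj hkl)
    have hXsum : μH[2] (inv3 r '' E) = ∑' k, μH[2] (inv3 r '' A k) := by
      rw [himg, measure_iUnion himgdisj himgmeas]
    have hLsum : (∫⁻ x in E, D x ∂μH[2]) = ∑' k, ∫⁻ x in A k, D x ∂μH[2] := by
      rw [hAcover, lintegral_iUnion hAmeas hAdisj]
    constructor
    · rw [hXsum, hLsum, ← ENNReal.tsum_mul_left]
      exact ENNReal.tsum_le_tsum fun k => (hbounds k).1
    · rw [hXsum, hLsum, ← ENNReal.tsum_mul_left]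
      exact ENNReal.tsum_le_tsum fun k => (hbounds k).2
  refine le_antisymm (squeeze_aux fun t ht => (key t ht).1)
    (squeeze_aux fun t ht => (key t ht).2)

end InvThm3

namespace InvThm4
open InvThm InvThm2 InvThm3

lemma inv3_surjective {r : ℝ} (hr : 0 < r) : Function.Surjective (inv3 r) :=
  fun y => ⟨inv3 r y, inv3_invol hr y⟩

lemma map_measure_eq {r : ℝ} (hr : 0 < r) {S : Set V} (hS : MeasurableSet S)
    (h0 : ∀ x ∈ S, x ≠ 0) :
    μH[2].restrict (inv3 r '' S) =
      Measure.map (inv3 r) ((μH[2].restrict S).withDensity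
        (fun x => ENNReal.ofReal ((r ^ 2 / ‖x‖ ^ 2) ^ 2))) := by
  ext A hA
  rw [Measure.map_apply (measurable_inv3 r) hA,
    withDensity_apply _ (measurable_inv3 r hA),
    Measure.restrict_restrict (measurable_inv3 r hA),
    Measure.restrict_apply hA]
  have hset : A ∩ inv3 r '' S = inv3 r '' (inv3 r ⁻¹' A ∩ S) := by
    rw [Set.image_inter (inv3_injective hr), Set.image_preimage_eq A (inv3_surjective hr)]
  rw [hset, hausdorff_image_inv3 hr ((measurable_inv3 r hA).inter hS)
    (fun x hx => h0 x hx.2)]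

end InvThm4

end
open InvThm InvThm2 InvThm3 InvThm4

/-- The map `φ ↦ φ*` preserves the single-layer bilinear form in three dimensions:
`∫∫ Γ(w−z) φ*(w) ψ*(z) dσ*(z) dσ*(w) = ∫∫ Γ(x−y) φ(x) ψ(y) dσ(y) dσ(x)`,
where `Γ(z) = −1/(4π|z|)` and `φ*(Ty) = φ(y)|y|³/r³`. -/
theorem bilinear_form_inversion_invariance_dim3
    (r : ℝ) (hr : 0 < r) (Ω : Set (EuclideanSpace ℝ (Fin 3)))
    (hopen : IsOpen Ω) (hbd : Bornology.IsBounded Ω)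
    (h0 : (0 : EuclideanSpace ℝ (Fin 3)) ∉ frontier Ω)
    (T : EuclideanSpace ℝ (Fin 3) → EuclideanSpace ℝ (Fin 3))
    (hT : ∀ x : EuclideanSpace ℝ (Fin 3), x ≠ 0 → T x = (r ^ 2 / ‖x‖ ^ 2) • x)
    (σ σs : Measure (EuclideanSpace ℝ (Fin 3)))
    (hσ : σ = μH[2].restrict (frontier Ω))
    (hσs : σs = μH[2].restrict (T '' frontier Ω))
    (hfin : σ (frontier Ω) < ⊤)
    (φ ψ : EuclideanSpace ℝ (Fin 3) → ℝ)
    (hφmeas : Measurable φ) (hψmeas : Measurable ψ)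
    (hφbdd : ∃ C, ∀ y, |φ y| ≤ C) (hψbdd : ∃ C, ∀ y, |ψ y| ≤ C)
    (φs ψs : EuclideanSpace ℝ (Fin 3) → ℝ)
    (hφs : ∀ y ∈ frontier Ω, φs (T y) = φ y * ‖y‖ ^ 3 / r ^ 3)
    (hψs : ∀ y ∈ frontier Ω, ψs (T y) = ψ y * ‖y‖ ^ 3 / r ^ 3)
    (hint : Integrable
      (fun q : EuclideanSpace ℝ (Fin 3) × EuclideanSpace ℝ (Fin 3) =>
        (-1 / (4 * π * ‖q.1 - q.2‖)) * φ q.1 * ψ q.2) (σ.prod σ)) :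
    ∫ w, ∫ z, (-1 / (4 * π * ‖w - z‖)) * φs w * ψs z ∂σs ∂σs =
      ∫ x, ∫ y, (-1 / (4 * π * ‖x - y‖)) * φ x * ψ y ∂σ ∂σ := by
  classical
  set S : Set V := frontier Ω with hSdef
  have hSmeas : MeasurableSet S := isClosed_frontier.measurableSet
  have hS0 : ∀ x ∈ S, x ≠ 0 := fun x hx hx0 => h0 (hx0 ▸ hx)
  have hTI : ∀ x ∈ S, T x = inv3 r x := fun x hx => hT x (hS0 x hx)
  have himg : T '' S = inv3 r '' S := Set.image_congr hTI
  set D₀ : V → ℝ≥0 := fun x => Real.toNNReal ((r ^ 2 / ‖x‖ ^ 2) ^ 2) with hD₀def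
  have hD₀meas : Measurable D₀ :=
    ((measurable_const.div (measurable_norm.pow_const 2)).pow_const 2).real_toNNReal
  have hσs' : σs = Measure.map (inv3 r)
      ((μH[2].restrict S).withDensity (fun x => (D₀ x : ℝ≥0∞))) := by
    rw [hσs, himg, map_measure_eq hr hSmeas hS0]
    rfl
  -- single-integral change of variables
  have key : ∀ f : V → ℝ,
      ∫ w, f w ∂σs = ∫ x, (D₀ x : ℝ) * f (inv3 r x) ∂σ := by
    intro f
    rw [hσs', show inv3 r = ⇑(inv3Equiv r hr) from rfl,
      MeasurableEmbedding.integral_map (inv3Equiv r hr).measurableEmbedding,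
      integral_withDensity_eq_integral_smul hD₀meas, hσ]
    simp only [NNReal.smul_def, smul_eq_mul]
  -- pointwise identity
  have hpt : ∀ x ∈ S, ∀ y ∈ S,
      (D₀ x : ℝ) * ((D₀ y : ℝ) *
        ((-1 / (4 * π * ‖inv3 r x - inv3 r y‖)) * φs (inv3 r x) * ψs (inv3 r y))) =
      (-1 / (4 * π * ‖x - y‖)) * φ x * ψ y := by
    intro x hx y hy
    have hx0 := hS0 x hx
    have hy0 := hS0 y hy
    have hxn : (0:ℝ) < ‖x‖ := norm_pos_iff.2 hx0
    have hyn : (0:ℝ) < ‖y‖ := norm_pos_iff.2 hy0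
    have hcx : ((D₀ x : ℝ)) = (r ^ 2 / ‖x‖ ^ 2) ^ 2 :=
      Real.coe_toNNReal _ (by positivity)
    have hcy : ((D₀ y : ℝ)) = (r ^ 2 / ‖y‖ ^ 2) ^ 2 :=
      Real.coe_toNNReal _ (by positivity)
    rw [hcx, hcy, norm_inv3_sub hr hx0 hy0, ← hTI x hx, ← hTI y hy,
      hφs x hx, hψs y hy]
    rcases eq_or_ne x y with hxy | hxy
    · subst hxy
      simp
    · have hne : ‖x - y‖ ≠ 0 := by
        simpa [sub_eq_zero] using hxy
      have hπ : (π : ℝ) ≠ 0 := Real.pi_ne_zero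
      field_simp
  -- assemble
  calc ∫ w, ∫ z, (-1 / (4 * π * ‖w - z‖)) * φs w * ψs z ∂σs ∂σs
      = ∫ x, (D₀ x : ℝ) *
          ∫ z, (-1 / (4 * π * ‖inv3 r x - z‖)) * φs (inv3 r x) * ψs z ∂σs ∂σ :=
        key _
    _ = ∫ x, (D₀ x : ℝ) * ∫ y, (D₀ y : ℝ) *
          ((-1 / (4 * π * ‖inv3 r x - inv3 r y‖)) * φs (inv3 r x) * ψs (inv3 r y)) ∂σ ∂σ := by
        congr 1
        funext x
        rw [key]
    _ = ∫ x, ∫ y, (-1 / (4 * π * ‖x - y‖)) * φ x * ψ y ∂σ ∂σ := by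
        rw [hσ]
        apply integral_congr_ae
        filter_upwards [ae_restrict_mem hSmeas] with x hx
        rw [← integral_const_mul]
        apply integral_congr_ae
        filter_upwards [ae_restrict_mem hSmeas] with y hy
        exact hpt x hx y hy
end

section
/- Let Ω ⊆ ℝ² be a bounded open set with 0 ∉ ∂Ω, r > 0, T the inversion in the sphere of radius r centered at the origin, σ the 1-dimensional Hausdorff measure restricted to ∂Ω, and σ* the 1-dimensional Hausdorff measure restricted to ∂Ω* := T(∂Ω). Let φ, ψ : ℝ² → ℝ be bounded Borel measurable with σ(∂Ω) < ∞, ∫_{∂Ω} φ dσ = 0 and ∫_{∂Ω} ψ dσ = 0, and define φ*(T y) := φ(y)|y|²/r² and ψ*(T y) := ψ(y)|y|²/r² on ∂Ω*. If (x,y) ↦ Γ(x − y)φ(x)ψ(y) is integrable with respect to σ × σ, then ∫_{∂Ω*}∫_{∂Ω*} Γ(w − z) φ*(w) ψ*(z) dσ*(z) dσ*(w) = ∫_{∂Ω}∫_{∂Ω} Γ(x − y) φ(x) ψ(y) dσ(y) dσ(x), where Γ(z) = (1/(2π)) log|z|. (Hence in two dimensions φ ↦ φ* preserves the single-layer bilinear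 form on mean-zero densities.) -/
open MeasureTheory
open scoped Real ENNReal NNReal RealInnerProductSpace

noncomputable section
namespace BFI

abbrev E2 := EuclideanSpace ℝ (Fin 2)



def sinv (r : ℝ) (x : E2) : E2 := (r ^ 2 / ‖x‖ ^ 2) • x

lemma sinv_zero (r : ℝ) : sinv r 0 = 0 := by simp [sinv]

lemma norm_sinv (r : ℝ) (hr : 0 < r) {x : E2} (hx : x ≠ 0) : ‖sinv r x‖ = r ^ 2 / ‖x‖ := by
  have hx' : (0:ℝ) < ‖x‖ := norm_pos_iff.mpr hx
  rw [sinv, norm_smul, Real.norm_eq_abs,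
    abs_of_nonneg (by positivity : (0:ℝ) ≤ r ^ 2 / ‖x‖ ^ 2)]
  field_simp

lemma sinv_ne_zero (r : ℝ) (hr : 0 < r) {x : E2} (hx : x ≠ 0) : sinv r x ≠ 0 := by
  have hx' : (0:ℝ) < ‖x‖ := norm_pos_iff.mpr hx
  have h : (0:ℝ) < ‖sinv r x‖ := by rw [norm_sinv r hr hx]; positivity
  exact norm_pos_iff.mp h

lemma sinv_involutive (r : ℝ) (hr : 0 < r) : Function.Involutive (sinv r) := by
  intro x
  rcases eq_or_ne x 0 with rfl | hx
  · simp [sinv]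
  · have hx' : (0:ℝ) < ‖x‖ := norm_pos_iff.mpr hx
    rw [show sinv r (sinv r x) = (r ^ 2 / ‖sinv r x‖ ^ 2) • sinv r x from rfl,
      norm_sinv r hr hx, sinv, smul_smul]
    have : r ^ 2 / (r ^ 2 / ‖x‖) ^ 2 * (r ^ 2 / ‖x‖ ^ 2) = 1 := by
      field_simp
    rw [this, one_smul]

lemma measurable_sinv (r : ℝ) : Measurable (sinv r) := by
  apply Measurable.smul (f := fun x : E2 => r ^ 2 / ‖x‖ ^ 2) (g := id)
  · exact (measurable_const.div ((measurable_norm).pow_const 2))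
  · exact measurable_id

def sinvEquiv (r : ℝ) (hr : 0 < r) : E2 ≃ᵐ E2 where
  toEquiv := Function.Involutive.toPerm _ (sinv_involutive r hr)
  measurable_toFun := measurable_sinv r
  measurable_invFun := measurable_sinv r

lemma norm_sinv_sub (r : ℝ) (hr : 0 < r) {x y : E2} (hx : x ≠ 0) (hy : y ≠ 0) :
    ‖sinv r x - sinv r y‖ = r ^ 2 / (‖x‖ * ‖y‖) * ‖x - y‖ := by
  have hx' : (0:ℝ) < ‖x‖ := norm_pos_iff.mpr hx
  have hy' : (0:ℝ) < ‖y‖ := norm_pos_iff.mpr hy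
  have h1 : ‖sinv r x - sinv r y‖ ^ 2 = (r ^ 2 / (‖x‖ * ‖y‖) * ‖x - y‖) ^ 2 := by
    have e1 := @norm_sub_sq_real E2 _ _ (sinv r x) (sinv r y)
    have e2 := @norm_sub_sq_real E2 _ _ x y
    rw [sinv, sinv] at e1
    rw [real_inner_smul_left, real_inner_smul_right, norm_smul, norm_smul,
      Real.norm_eq_abs, Real.norm_eq_abs,
      abs_of_nonneg (by positivity : (0:ℝ) ≤ r ^ 2 / ‖x‖ ^ 2),
      abs_of_nonneg (by positivity : (0:ℝ) ≤ r ^ 2 / ‖y‖ ^ 2)] at e1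
    simp only [sinv]
    rw [e1]
    have hinner : ⟪x, y⟫ = (‖x‖ ^ 2 + ‖y‖ ^ 2 - ‖x - y‖ ^ 2) / 2 := by
      rw [e2]; ring
    rw [hinner]
    field_simp
    ring
  have h2 : (0:ℝ) ≤ ‖sinv r x - sinv r y‖ := norm_nonneg _
  have h3 : (0:ℝ) ≤ r ^ 2 / (‖x‖ * ‖y‖) * ‖x - y‖ := by positivity
  rw [← Real.sqrt_sq h2, ← Real.sqrt_sq h3, h1]



/-- Jacobian density of the inversion on 1-dimensional sets. -/
def jac (r : ℝ) (y : E2) : ℝ≥0∞ := ENNReal.ofReal (r ^ 2 / ‖y‖ ^ 2)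

lemma measurable_jac (r : ℝ) : Measurable (jac r) :=
  ENNReal.measurable_ofReal.comp (measurable_const.div ((measurable_norm).pow_const 2))

lemma lipschitzOnWith_sinv (r : ℝ) (hr : 0 < r) {c : ℝ} (hc : 0 < c) :
    LipschitzOnWith (Real.toNNReal (r ^ 2 / c ^ 2)) (sinv r) {x : E2 | c ≤ ‖x‖} := by
  rw [lipschitzOnWith_iff_dist_le_mul]
  intro x hx y hy
  simp only [Set.mem_setOf_eq] at hx hy
  have hx0 : x ≠ 0 := by intro h; rw [h, norm_zero] at hx; linarith
  have hy0 : y ≠ 0 := by intro h; rw [h, norm_zero] at hy; linarith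
  rw [dist_eq_norm, dist_eq_norm, norm_sinv_sub r hr hx0 hy0,
    Real.coe_toNNReal _ (by positivity : (0:ℝ) ≤ r ^ 2 / c ^ 2)]
  have hxx : (0:ℝ) < ‖x‖ := lt_of_lt_of_le hc hx
  have hyy : (0:ℝ) < ‖y‖ := lt_of_lt_of_le hc hy
  gcongr ?_ * _
  rw [div_le_div_iff₀ (by positivity) (by positivity)]
  nlinarith [mul_le_mul hx hy hc.le (hc.le.trans hx), sq_nonneg r]

lemma hausdorff_image_le (r : ℝ) (hr : 0 < r) {c : ℝ} (hc : 0 < c) {S : Set E2}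
    (hS : ∀ x ∈ S, c ≤ ‖x‖) :
    μH[1] (sinv r '' S) ≤ ENNReal.ofReal (r ^ 2 / c ^ 2) * μH[1] S := by
  have h := ((lipschitzOnWith_sinv r hr hc).mono (fun x hx => hS x hx)).hausdorffMeasure_image_le
    (le_of_lt one_pos)
  exact (by simpa using h : μH[1] (sinv r '' S) ≤ ((r ^ 2 / c ^ 2).toNNReal : ℝ≥0∞) * μH[1] S)

lemma piece_le₁ (r : ℝ) (hr : 0 < r) {c δ : ℝ} (hc : 0 < c) (hδ : 0 ≤ δ) {S : Set E2}
    (hS : ∀ x ∈ S, c ≤ ‖x‖ ∧ ‖x‖ ≤ c * (1 + δ)) :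
    μH[1] (sinv r '' S) ≤ ENNReal.ofReal ((1 + δ) ^ 2) * ∫⁻ y in S, jac r y ∂μH[1] := by
  have h1 : μH[1] (sinv r '' S) ≤ ENNReal.ofReal (r ^ 2 / c ^ 2) * μH[1] S :=
    hausdorff_image_le r hr hc (fun x hx => (hS x hx).1)
  have h2 : ENNReal.ofReal (r ^ 2 / (c * (1 + δ)) ^ 2) * μH[1] S ≤ ∫⁻ y in S, jac r y ∂μH[1] := by
    rw [← setLIntegral_const S _]
    refine setLIntegral_mono (measurable_jac r) (fun y hy => ?_)
    refine ENNReal.ofReal_le_ofReal ?_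
    have h := hS y hy
    have hy0 : (0:ℝ) < ‖y‖ := lt_of_lt_of_le hc h.1
    rw [div_le_div_iff₀ (by positivity) (by positivity)]
    nlinarith [mul_le_mul h.2 h.2 (norm_nonneg y) (by positivity : (0:ℝ) ≤ c * (1+δ)), sq_nonneg r]
  calc μH[1] (sinv r '' S) ≤ ENNReal.ofReal (r ^ 2 / c ^ 2) * μH[1] S := h1
    _ = ENNReal.ofReal ((1 + δ) ^ 2) * (ENNReal.ofReal (r ^ 2 / (c * (1 + δ)) ^ 2) * μH[1] S) := by
        rw [← mul_assoc, ← ENNReal.ofReal_mul (by positivity)]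
        congr 1
        field_simp
    _ ≤ ENNReal.ofReal ((1 + δ) ^ 2) * ∫⁻ y in S, jac r y ∂μH[1] := by gcongr

lemma piece_le₂ (r : ℝ) (hr : 0 < r) {c δ : ℝ} (hc : 0 < c) (hδ : 0 ≤ δ) {S : Set E2}
    (hS : ∀ x ∈ S, c ≤ ‖x‖ ∧ ‖x‖ ≤ c * (1 + δ)) :
    ∫⁻ y in S, jac r y ∂μH[1] ≤ ENNReal.ofReal ((1 + δ) ^ 2) * μH[1] (sinv r '' S) := by
  have hcδ : (0:ℝ) < c * (1 + δ) := by positivity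
  have hc' : (0:ℝ) < r ^ 2 / (c * (1 + δ)) := by positivity
  have hSS : sinv r '' (sinv r '' S) = S := by
    rw [← Set.image_comp, Function.Involutive.comp_self (sinv_involutive r hr), Set.image_id]
  have himg : ∀ z ∈ sinv r '' S, r ^ 2 / (c * (1 + δ)) ≤ ‖z‖ := by
    rintro z ⟨x, hx, rfl⟩
    have h := hS x hx
    have hx0 : x ≠ 0 := by
      intro h0; rw [h0, norm_zero] at h; linarith [h.1]
    rw [norm_sinv r hr hx0]
    have hx1 : (0:ℝ) < ‖x‖ := lt_of_lt_of_le hc h.1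
    rw [div_le_div_iff₀ (by positivity) hx1]
    nlinarith [h.2]
  have h3 : μH[1] S ≤ ENNReal.ofReal ((c * (1 + δ)) ^ 2 / r ^ 2) * μH[1] (sinv r '' S) := by
    have := hausdorff_image_le r hr hc' himg
    rw [hSS] at this
    convert this using 2
    field_simp
  have h4 : ∫⁻ y in S, jac r y ∂μH[1] ≤ ENNReal.ofReal (r ^ 2 / c ^ 2) * μH[1] S := by
    rw [← setLIntegral_const S _]
    refine setLIntegral_mono measurable_const (fun y hy => ?_)
    refine ENNReal.ofReal_le_ofReal ?_
    have h := hS y hy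
    have hy0 : (0:ℝ) < ‖y‖ := lt_of_lt_of_le hc h.1
    rw [div_le_div_iff₀ (by positivity) (by positivity)]
    nlinarith [mul_le_mul h.1 h.1 hc.le (norm_nonneg y), sq_nonneg r]
  calc ∫⁻ y in S, jac r y ∂μH[1] ≤ ENNReal.ofReal (r ^ 2 / c ^ 2) * μH[1] S := h4
    _ ≤ ENNReal.ofReal (r ^ 2 / c ^ 2) *
        (ENNReal.ofReal ((c * (1 + δ)) ^ 2 / r ^ 2) * μH[1] (sinv r '' S)) := by gcongr
    _ = ENNReal.ofReal ((1 + δ) ^ 2) * μH[1] (sinv r '' S) := by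
        rw [← mul_assoc, ← ENNReal.ofReal_mul (by positivity)]
        congr 2
        field_simp


lemma image_eq_preimage_sinv (r : ℝ) (hr : 0 < r) (A : Set E2) :
    sinv r '' A = sinv r ⁻¹' A :=
  congrFun (Set.image_eq_preimage_of_inverse (sinv_involutive r hr) (sinv_involutive r hr)) A

lemma global_bounds (r : ℝ) (hr : 0 < r) {a δ : ℝ} (ha : 0 < a) (hδ : 0 < δ) {S : Set E2}
    (hSm : MeasurableSet S) (hS : ∀ x ∈ S, a ≤ ‖x‖) :
    μH[1] (sinv r '' S) ≤ ENNReal.ofReal ((1 + δ) ^ 2) * ∫⁻ y in S, jac r y ∂μH[1] ∧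
    ∫⁻ y in S, jac r y ∂μH[1] ≤ ENNReal.ofReal ((1 + δ) ^ 2) * μH[1] (sinv r '' S) := by
  have hu : (1:ℝ) < 1 + δ := by linarith
  set P : ℕ → Set E2 := fun i =>
    S ∩ {x | a * (1 + δ) ^ i ≤ ‖x‖ ∧ ‖x‖ < a * (1 + δ) ^ (i + 1)} with hP
  have hPm : ∀ i, MeasurableSet (P i) := by
    intro i
    exact hSm.inter ((measurableSet_le measurable_const measurable_norm).inter
      (measurableSet_lt measurable_norm measurable_const))
  have hPd : Pairwise (Function.onFun Disjoint P) := by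
    intro i j hij
    rcases hij.lt_or_gt with h | h
    all_goals {
      rw [Function.onFun, Set.disjoint_left]
      rintro x ⟨-, h1, h2⟩ ⟨-, h3, h4⟩
      have hle : ∀ {m n : ℕ}, m + 1 ≤ n → a * (1 + δ) ^ (m + 1) ≤ a * (1 + δ) ^ n := by
        intro m n hmn
        have := pow_le_pow_right₀ hu.le hmn
        nlinarith [pow_pos (lt_trans one_pos hu) (m+1)]
      first
      | exact absurd (lt_of_lt_of_le h2 (le_trans (hle h) h3)) (lt_irrefl _)
      | exact absurd (lt_of_lt_of_le h4 (le_trans (hle h) h1)) (lt_irrefl _) }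
  have hPcover : ⋃ i, P i = S := by
    apply Set.Subset.antisymm
    · exact Set.iUnion_subset fun i => Set.inter_subset_left
    · intro x hx
      have hax : a ≤ ‖x‖ := hS x hx
      have hex : ∃ i : ℕ, ‖x‖ < a * (1 + δ) ^ (i + 1) := by
        obtain ⟨n, hn⟩ := pow_unbounded_of_one_lt (‖x‖ / a) hu
        rw [div_lt_iff₀ ha] at hn
        refine ⟨n, ?_⟩
        have he : a * (1 + δ) ^ (n + 1) = (1 + δ) ^ n * a * (1 + δ) := by ring
        nlinarith [pow_pos (lt_trans one_pos hu) n]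
      classical
      set i := Nat.find hex with hidef
      refine Set.mem_iUnion.mpr ⟨i, hx, ?_, Nat.find_spec hex⟩
      rcases Nat.eq_zero_or_pos i with h0 | hpos
      · rw [h0]; simpa using hax
      · have hk : i - 1 < i := by omega
        have hm := Nat.find_min hex hk
        push_neg at hm
        have hm' : a * (1 + δ) ^ (i - 1 + 1) ≤ ‖x‖ := hm
        rwa [Nat.sub_add_cancel hpos] at hm'
  have himg : sinv r '' S = ⋃ i, sinv r '' P i := by
    rw [← hPcover, Set.image_iUnion]
  have himg_meas : ∀ i, MeasurableSet (sinv r '' P i) := by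
    intro i
    rw [image_eq_preimage_sinv r hr]
    exact (measurable_sinv r) (hPm i)
  have himg_disj : Pairwise (Function.onFun Disjoint (fun i => sinv r '' P i)) := by
    intro i j hij
    rw [Function.onFun, image_eq_preimage_sinv r hr, image_eq_preimage_sinv r hr]
    exact Disjoint.preimage _ (hPd hij)
  have hmeq : μH[1] (sinv r '' S) = ∑' i, μH[1] (sinv r '' P i) := by
    rw [himg, measure_iUnion himg_disj himg_meas]
  have hleq : ∫⁻ y in S, jac r y ∂μH[1] = ∑' i, ∫⁻ y in P i, jac r y ∂μH[1] := by
    rw [← hPcover, lintegral_iUnion hPm hPd]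
  have hPc : ∀ i, ∀ x ∈ P i,
      a * (1 + δ) ^ i ≤ ‖x‖ ∧ ‖x‖ ≤ a * (1 + δ) ^ i * (1 + δ) := by
    intro i x hx
    refine ⟨hx.2.1, ?_⟩
    have := hx.2.2
    rw [pow_succ] at this
    linarith [this]
  have hc : ∀ i : ℕ, (0:ℝ) < a * (1 + δ) ^ i := by
    intro i; positivity
  constructor
  · rw [hmeq, hleq, ← ENNReal.tsum_mul_left]
    exact ENNReal.tsum_le_tsum fun i => piece_le₁ r hr (hc i) hδ.le (hPc i)
  · rw [hmeq, hleq, ← ENNReal.tsum_mul_left]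
    exact ENNReal.tsum_le_tsum fun i => piece_le₂ r hr (hc i) hδ.le (hPc i)


lemma real_squeeze {A B : ℝ} (hB : 0 ≤ B) (h : ∀ δ : ℝ, 0 < δ → A ≤ (1 + δ) ^ 2 * B) :
    A ≤ B := by
  refine le_of_forall_pos_le_add fun ε hε => ?_
  set δ := min 1 (ε / (3 * (B + 1))) with hδdef
  have hδpos : 0 < δ := lt_min one_pos (by positivity)
  have hδ1 : δ ≤ 1 := min_le_left _ _
  have hδ2 : δ ≤ ε / (3 * (B + 1)) := min_le_right _ _
  have hA := h δ hδpos
  have h3 : (1 + δ) ^ 2 * B ≤ B + 3 * δ * (B + 1) := by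
    nlinarith [mul_le_mul_of_nonneg_right (mul_le_mul_of_nonneg_left hδ1 hδpos.le) hB,
      mul_nonneg hδpos.le hB]
  have h4 : 3 * δ * (B + 1) ≤ ε := by
    rw [le_div_iff₀ (by positivity : (0:ℝ) < 3 * (B + 1))] at hδ2
    linarith
  linarith

lemma ennreal_squeeze {A I : ℝ≥0∞} (hA : A ≠ ⊤) (hI : I ≠ ⊤)
    (h : ∀ δ : ℝ, 0 < δ → A ≤ ENNReal.ofReal ((1 + δ) ^ 2) * I) : A ≤ I := by
  rw [← ENNReal.toReal_le_toReal hA hI]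
  refine real_squeeze ENNReal.toReal_nonneg fun δ hδ => ?_
  have hm : ENNReal.ofReal ((1 + δ) ^ 2) * I ≠ ⊤ :=
    ENNReal.mul_ne_top ENNReal.ofReal_ne_top hI
  have := ENNReal.toReal_mono hm (h δ hδ)
  rwa [ENNReal.toReal_mul, ENNReal.toReal_ofReal (by positivity)] at this

lemma lintegral_jac_le (r : ℝ) {a : ℝ} (ha : 0 < a) {S : Set E2} (hS : ∀ x ∈ S, a ≤ ‖x‖) :
    ∫⁻ y in S, jac r y ∂μH[1] ≤ ENNReal.ofReal (r ^ 2 / a ^ 2) * μH[1] S := by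
  rw [← setLIntegral_const S _]
  refine setLIntegral_mono measurable_const fun y hy => ENNReal.ofReal_le_ofReal ?_
  have h := hS y hy
  have hy0 : (0:ℝ) < ‖y‖ := lt_of_lt_of_le ha h
  rw [div_le_div_iff₀ (by positivity) (by positivity)]
  nlinarith [mul_le_mul h h ha.le (norm_nonneg y), sq_nonneg r]

lemma image_hausdorff_eq (r : ℝ) (hr : 0 < r) {a : ℝ} (ha : 0 < a) {S : Set E2}
    (hSm : MeasurableSet S) (hS : ∀ x ∈ S, a ≤ ‖x‖) (hfin : μH[1] S < ⊤) :
    μH[1] (sinv r '' S) = ∫⁻ y in S, jac r y ∂μH[1] := by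
  have hAfin : μH[1] (sinv r '' S) ≠ ⊤ := by
    refine ne_of_lt (lt_of_le_of_lt (hausdorff_image_le r hr ha hS) ?_)
    exact ENNReal.mul_lt_top ENNReal.ofReal_lt_top hfin
  have hIfin : (∫⁻ y in S, jac r y ∂μH[1]) ≠ ⊤ := by
    refine ne_of_lt (lt_of_le_of_lt (lintegral_jac_le r ha hS) ?_)
    exact ENNReal.mul_lt_top ENNReal.ofReal_lt_top hfin
  refine le_antisymm ?_ ?_
  · exact ennreal_squeeze hAfin hIfin fun δ hδ => (global_bounds r hr ha hδ hSm hS).1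
  · exact ennreal_squeeze hIfin hAfin fun δ hδ => (global_bounds r hr ha hδ hSm hS).2


def jacn (r : ℝ) (y : E2) : ℝ≥0 := Real.toNNReal (r ^ 2 / ‖y‖ ^ 2)

lemma measurable_jacn (r : ℝ) : Measurable (jacn r) :=
  measurable_real_toNNReal.comp (measurable_const.div ((measurable_norm).pow_const 2))

lemma jac_eq_coe_jacn (r : ℝ) (y : E2) : jac r y = (jacn r y : ℝ≥0∞) := rfl

lemma map_measure_eq (r : ℝ) (hr : 0 < r) {K : Set E2} (hK : MeasurableSet K) {a : ℝ}
    (ha : 0 < a) (haK : ∀ x ∈ K, a ≤ ‖x‖) (hfin : μH[1] K < ⊤) :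
    Measure.map (sinv r) ((μH[1].restrict K).withDensity (jac r)) =
      μH[1].restrict (sinv r '' K) := by
  ext A hA
  have hpre : MeasurableSet (sinv r ⁻¹' A) := measurable_sinv r hA
  rw [Measure.map_apply (measurable_sinv r) hA,
    withDensity_apply _ hpre, Measure.restrict_restrict hpre,
    Measure.restrict_apply hA]
  have hS : MeasurableSet (sinv r ⁻¹' A ∩ K) := hpre.inter hK
  have hSa : ∀ x ∈ sinv r ⁻¹' A ∩ K, a ≤ ‖x‖ := fun x hx => haK x hx.2
  have hSfin : μH[1] (sinv r ⁻¹' A ∩ K) < ⊤ :=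
    lt_of_le_of_lt (measure_mono Set.inter_subset_right) hfin
  rw [← image_hausdorff_eq r hr ha hS hSa hSfin]
  congr 1
  have h2 : sinv r ⁻¹' (sinv r ⁻¹' A) = A := by
    ext z; simp [sinv_involutive r hr z]
  rw [image_eq_preimage_sinv r hr, Set.preimage_inter, h2,
    ← image_eq_preimage_sinv r hr]

lemma integral_change (r : ℝ) (hr : 0 < r) {K : Set E2} (hK : MeasurableSet K) {a : ℝ}
    (ha : 0 < a) (haK : ∀ x ∈ K, a ≤ ‖x‖) (hfin : μH[1] K < ⊤) (g : E2 → ℝ) :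
    ∫ z, g z ∂(μH[1].restrict (sinv r '' K)) =
      ∫ y, (r ^ 2 / ‖y‖ ^ 2) * g (sinv r y) ∂(μH[1].restrict K) := by
  rw [← map_measure_eq r hr hK ha haK hfin]
  have hfun : sinv r = ⇑(sinvEquiv r hr) := rfl
  rw [hfun, integral_map_equiv (sinvEquiv r hr) g]
  have hwd : ((μH[1].restrict K).withDensity (jac r)) =
      ((μH[1].restrict K).withDensity fun y => ((jacn r y : ℝ≥0∞))) := rfl
  rw [hwd, integral_withDensity_eq_integral_smul (measurable_jacn r)]
  refine integral_congr_ae (Filter.Eventually.of_forall fun y => ?_)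
  have : ((jacn r y : ℝ)) = r ^ 2 / ‖y‖ ^ 2 :=
    Real.coe_toNNReal _ (div_nonneg (sq_nonneg r) (sq_nonneg _))
  show jacn r y • g ((sinvEquiv r hr) y) = r ^ 2 / ‖y‖ ^ 2 * g ((sinvEquiv r hr) y)
  rw [NNReal.smul_def, smul_eq_mul, this]

lemma log_sinv_sub (r : ℝ) (hr : 0 < r) {x y : E2} (hx : x ≠ 0) (hy : y ≠ 0) (hxy : x ≠ y) :
    Real.log ‖sinv r x - sinv r y‖ =
      Real.log ‖x - y‖ + 2 * Real.log r - Real.log ‖x‖ - Real.log ‖y‖ := by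
  have hx' : (0:ℝ) < ‖x‖ := norm_pos_iff.mpr hx
  have hy' : (0:ℝ) < ‖y‖ := norm_pos_iff.mpr hy
  have hxy' : (0:ℝ) < ‖x - y‖ := norm_sub_pos_iff.mpr hxy
  rw [norm_sinv_sub r hr hx hy, Real.log_mul (by positivity) (ne_of_gt hxy'),
    Real.log_div (by positivity) (by positivity), Real.log_mul (ne_of_gt hx') (ne_of_gt hy'),
    Real.log_pow]
  push_cast
  ring

end BFI

open BFI


/-- The map `φ ↦ φ*` preserves the single-layer bilinear form in two dimensions on
mean-zero densities: `∫∫ Γ(w−z) φ*(w) ψ*(z) dσ*(z) dσ*(w) = ∫∫ Γ(x−y) φ(x) ψ(y) dσ(y) dσ(x)`,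
where `Γ(z) = (1/(2π)) log|z|` and `φ*(Ty) = φ(y)|y|²/r²`. -/
theorem bilinear_form_inversion_invariance_dim2
    (r : ℝ) (hr : 0 < r) (Ω : Set (EuclideanSpace ℝ (Fin 2)))
    (hopen : IsOpen Ω) (hbd : Bornology.IsBounded Ω)
    (h0 : (0 : EuclideanSpace ℝ (Fin 2)) ∉ frontier Ω)
    (T : EuclideanSpace ℝ (Fin 2) → EuclideanSpace ℝ (Fin 2))
    (hT : ∀ x : EuclideanSpace ℝ (Fin 2), x ≠ 0 → T x = (r ^ 2 / ‖x‖ ^ 2) • x)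
    (σ σs : Measure (EuclideanSpace ℝ (Fin 2)))
    (hσ : σ = μH[1].restrict (frontier Ω))
    (hσs : σs = μH[1].restrict (T '' frontier Ω))
    (hfin : σ (frontier Ω) < ⊤)
    (φ ψ : EuclideanSpace ℝ (Fin 2) → ℝ)
    (hφmeas : Measurable φ) (hψmeas : Measurable ψ)
    (hφbdd : ∃ C, ∀ y, |φ y| ≤ C) (hψbdd : ∃ C, ∀ y, |ψ y| ≤ C)
    (hφmean : ∫ y, φ y ∂σ = 0) (hψmean : ∫ y, ψ y ∂σ = 0)
    (φs ψs : EuclideanSpace ℝ (Fin 2) → ℝ)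
    (hφs : ∀ y ∈ frontier Ω, φs (T y) = φ y * ‖y‖ ^ 2 / r ^ 2)
    (hψs : ∀ y ∈ frontier Ω, ψs (T y) = ψ y * ‖y‖ ^ 2 / r ^ 2)
    (hint : Integrable
      (fun q : EuclideanSpace ℝ (Fin 2) × EuclideanSpace ℝ (Fin 2) =>
        (1 / (2 * π)) * Real.log ‖q.1 - q.2‖ * φ q.1 * ψ q.2) (σ.prod σ)) :
    ∫ w, ∫ z, (1 / (2 * π)) * Real.log ‖w - z‖ * φs w * ψs z ∂σs ∂σs =
      ∫ x, ∫ y, (1 / (2 * π)) * Real.log ‖x - y‖ * φ x * ψ y ∂σ ∂σ := by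
  classical
  set c' : ℝ := 1 / (2 * π) with hc'
  set K := frontier Ω with hKdef
  have hKm : MeasurableSet K := isClosed_frontier.measurableSet
  obtain ⟨a, ha, haK⟩ : ∃ a > 0, ∀ x ∈ K, a ≤ ‖x‖ := by
    obtain ⟨ε, hε, hball⟩ := Metric.isOpen_iff.mp isClosed_frontier.isOpen_compl 0 h0
    refine ⟨ε, hε, fun x hx => ?_⟩
    by_contra hlt
    push_neg at hlt
    exact hball (by simpa [Metric.mem_ball, dist_zero_right] using hlt) hx
  obtain ⟨b, hbK⟩ : ∃ b, ∀ x ∈ K, ‖x‖ ≤ b := by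
    obtain ⟨b, hb⟩ := isBounded_iff_forall_norm_le.mp hbd.closure
    exact ⟨b, fun x hx => hb x (frontier_subset_closure hx)⟩
  have hKfin : μH[1] K < ⊤ := by
    rw [hσ, Measure.restrict_apply_self] at hfin; exact hfin
  have hx0 : ∀ x ∈ K, x ≠ (0 : E2) := by
    intro x hx h
    have := haK x hx
    rw [h, norm_zero] at this
    linarith
  have hTK : ∀ x ∈ K, T x = sinv r x := fun x hx => hT x (hx0 x hx)
  have hσs' : σs = μH[1].restrict (sinv r '' K) := by
    rw [hσs, Set.image_congr hTK]
  haveI : IsFiniteMeasure σ := ⟨by rw [hσ, Measure.restrict_apply_univ]; exact hKfin⟩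
  have haeK : ∀ᵐ x ∂σ, x ∈ K := by rw [hσ]; exact ae_restrict_mem hKm
  haveI : NoAtoms (μH[1] : Measure E2) := Measure.noAtoms_hausdorff E2 one_pos
  have hsing : ∀ x : E2, σ {x} = 0 := by
    intro x
    rw [hσ, Measure.restrict_apply (measurableSet_singleton x)]
    exact measure_mono_null Set.inter_subset_left (NullSingletonClass.measure_singleton (self := this) x)
  obtain ⟨Cφ, hCφ⟩ := hφbdd
  obtain ⟨Cψ, hCψ⟩ := hψbdd
  have hφint : Integrable φ σ :=
    Integrable.mono' (integrable_const Cφ) hφmeas.aestronglyMeasurable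
      (Filter.Eventually.of_forall fun y => by simpa using hCφ y)
  have hψint : Integrable ψ σ :=
    Integrable.mono' (integrable_const Cψ) hψmeas.aestronglyMeasurable
      (Filter.Eventually.of_forall fun y => by simpa using hCψ y)
  have hlogψ : Integrable (fun y => Real.log ‖y‖ * ψ y) σ := by
    refine Integrable.mono' (integrable_const ((|Real.log a| + |Real.log b|) * Cψ))
      ((Real.measurable_log.comp measurable_norm).mul hψmeas).aestronglyMeasurable ?_
    filter_upwards [haeK] with y hyK
    have h1 : a ≤ ‖y‖ := haK y hyK
    have h2 : ‖y‖ ≤ b := hbK y hyK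
    have hlb : |Real.log ‖y‖| ≤ |Real.log a| + |Real.log b| := by
      rw [abs_le]
      constructor
      · have h4 := Real.log_le_log ha h1
        have h3 : -|Real.log a| ≤ Real.log a := neg_abs_le _
        linarith [abs_nonneg (Real.log b)]
      · have h4 := Real.log_le_log (lt_of_lt_of_le ha h1) h2
        have h3 : Real.log b ≤ |Real.log b| := le_abs_self _
        linarith [abs_nonneg (Real.log a)]
    rw [Real.norm_eq_abs, abs_mul]
    have hψa : |ψ y| ≤ Cψ := hCψ y
    exact mul_le_mul hlb hψa (abs_nonneg _) (by positivity)
  set D : ℝ := ∫ y, Real.log ‖y‖ * ψ y ∂σ with hDdef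
  rw [hσs']
  rw [integral_change r hr hKm ha haK hKfin
    (fun w => ∫ z, c' * Real.log ‖w - z‖ * φs w * ψs z ∂(μH[1].restrict (sinv r '' K))), ← hσ]
  have hain : ∀ᵐ x ∂σ, Integrable (fun y => c' * Real.log ‖x - y‖ * φ x * ψ y) σ := by
    have := hint.prod_right_ae
    simpa using this
  have key : ∀ᵐ x ∂σ,
      (r ^ 2 / ‖x‖ ^ 2) *
          ∫ z, c' * Real.log ‖sinv r x - z‖ * φs (sinv r x) * ψs z
            ∂(μH[1].restrict (sinv r '' K)) =
        (∫ y, c' * Real.log ‖x - y‖ * φ x * ψ y ∂σ) + φ x * (-(c' * D)) := by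
    filter_upwards [haeK, hain] with x hxK hxint
    have hxne : x ≠ 0 := hx0 x hxK
    have hxnorm : (0:ℝ) < ‖x‖ := norm_pos_iff.mpr hxne
    rw [integral_change r hr hKm ha haK hKfin
      (fun z => c' * Real.log ‖sinv r x - z‖ * φs (sinv r x) * ψs z), ← hσ]
    have hφsx : φs (sinv r x) = φ x * ‖x‖ ^ 2 / r ^ 2 := by
      rw [← hTK x hxK]; exact hφs x hxK
    have hinner :
        ∫ y, (r ^ 2 / ‖y‖ ^ 2) *
            (c' * Real.log ‖sinv r x - sinv r y‖ * φs (sinv r x) * ψs (sinv r y)) ∂σ =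
          ∫ y, c' * Real.log ‖sinv r x - sinv r y‖ * (φ x * ‖x‖ ^ 2 / r ^ 2) * ψ y ∂σ := by
      refine integral_congr_ae ?_
      filter_upwards [haeK] with y hyK
      have hyne : y ≠ 0 := hx0 y hyK
      have hynorm : (0:ℝ) < ‖y‖ := norm_pos_iff.mpr hyne
      have hψsy : ψs (sinv r y) = ψ y * ‖y‖ ^ 2 / r ^ 2 := by
        rw [← hTK y hyK]; exact hψs y hyK
      show (r ^ 2 / ‖y‖ ^ 2) *
          (c' * Real.log ‖sinv r x - sinv r y‖ * φs (sinv r x) * ψs (sinv r y)) =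
          c' * Real.log ‖sinv r x - sinv r y‖ * (φ x * ‖x‖ ^ 2 / r ^ 2) * ψ y
      rw [hψsy, hφsx]
      field_simp
    rw [hinner, ← integral_const_mul]
    have hps : ∀ y : E2, (r ^ 2 / ‖x‖ ^ 2) *
        (c' * Real.log ‖sinv r x - sinv r y‖ * (φ x * ‖x‖ ^ 2 / r ^ 2) * ψ y) =
        c' * Real.log ‖sinv r x - sinv r y‖ * φ x * ψ y := by
      intro y
      field_simp
    rw [integral_congr_ae (Filter.Eventually.of_forall hps)]
    by_cases hφx : φ x = 0
    · have hz1 : ∀ g : E2 → ℝ, ∫ y, c' * g y * φ x * ψ y ∂σ = 0 := by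
        intro g
        have hzz : (fun y => c' * g y * φ x * ψ y) = fun _ => (0:ℝ) := by
          funext y; rw [hφx]; ring
        rw [hzz, integral_zero]
      rw [hz1 (fun y => Real.log ‖sinv r x - sinv r y‖), hz1 (fun y => Real.log ‖x - y‖), hφx]
      ring
    · have hae2 : ∀ᵐ y ∂σ, y ≠ x := by
        rw [ae_iff]
        convert hsing x using 2
        ext y
        simp
      have heq : ∀ᵐ y ∂σ, c' * Real.log ‖sinv r x - sinv r y‖ * φ x * ψ y =
          c' * Real.log ‖x - y‖ * φ x * ψ y +
            (c' * (2 * Real.log r - Real.log ‖x‖) * φ x) * ψ y -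
            (c' * φ x) * (Real.log ‖y‖ * ψ y) := by
        filter_upwards [haeK, hae2] with y hyK hyx
        have hyne : y ≠ 0 := hx0 y hyK
        rw [log_sinv_sub r hr hxne hyne (Ne.symm hyx)]
        ring
      rw [integral_congr_ae heq]
      have hI2 : Integrable
          (fun y => (c' * (2 * Real.log r - Real.log ‖x‖) * φ x) * ψ y) σ := by
        exact hψint.const_mul _
      have hI3 : Integrable (fun y => (c' * φ x) * (Real.log ‖y‖ * ψ y)) σ := by
        exact hlogψ.const_mul _
      have hI12 : Integrable (fun y => c' * Real.log ‖x - y‖ * φ x * ψ y +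
          (c' * (2 * Real.log r - Real.log ‖x‖) * φ x) * ψ y) σ := by
        exact hxint.add hI2
      rw [integral_sub hI12 hI3, integral_add hxint hI2, integral_const_mul,
        integral_const_mul, hψmean, ← hDdef]
      ring
  rw [integral_congr_ae key]
  have hH : Integrable (fun x => ∫ y, c' * Real.log ‖x - y‖ * φ x * ψ y ∂σ) σ := by
    have := hint.integral_prod_left
    simpa using this
  rw [integral_add hH (hφint.mul_const _), integral_mul_const, hφmean]
  ring
end
end
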